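/- arXiv:2506.16085 — 13 statements merged into one kernel-verified Lean document; each statement's English description precedes it below -/
import Mathlib

section
/- Let H be a standard subspace of a complex Hilbert space ℋ (i.e., a closed real-linear subspace with H ∩ iH = {0} and H + iH dense). If the modular operator Δ_H is bounded, then H + iH = ℋ, and consequently any standard subspace K with H ⊆ K satisfies K = H. -/
open Complex Submodule Filter Topology

variable {E : Type*} [NormedAddCommGroup E] [InnerProductSpace ℂ E]

/-- Multiplication by `i` as a real-linear map. -/
noncomputable def mulI (E : Type*) [NormedAddCommGroup E] [InnerProductSpace ℂ E] :
    E →ₗ[ℝ] E where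
  toFun x := (Complex.I : ℂ) • x
  map_add' := fun x y => smul_add Complex.I x y
  map_smul' := fun r x => smul_comm Complex.I r x

/-- `H + iH` as a real submodule. -/
noncomputable def cspan (H : Submodule ℝ E) : Submodule ℝ E := H ⊔ H.map (mulI E)

/-- The symplectic complement `K' = {v : Im ⟨v, k⟩ = 0 ∀ k ∈ K}`. -/
noncomputable def sympl (K : Submodule ℝ E) : Submodule ℝ E where
  carrier := {v : E | ∀ k ∈ K, (inner ℂ v k : ℂ).im = 0}
  add_mem' := by
    intro a b ha hb k hk
    simp only [Set.mem_setOf_eq] at *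
    rw [inner_add_left, Complex.add_im, ha k hk, hb k hk, add_zero]
  zero_mem' := by intro k hk; simp
  smul_mem' := by
    intro c v hv k hk
    simp only [Set.mem_setOf_eq] at *
    have h : (c • v : E) = ((c : ℂ)) • v := by
      simp [Complex.coe_smul]
    rw [h, inner_smul_left]
    simp [hv k hk]

/-- The real-orthogonal complement `{v : Re ⟨v, k⟩ = 0 ∀ k ∈ K}`. -/
noncomputable def realPerp (K : Submodule ℝ E) : Submodule ℝ E where
  carrier := {v : E | ∀ k ∈ K, (inner ℂ v k : ℂ).re = 0}
  add_mem' := by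
    intro a b ha hb k hk
    simp only [Set.mem_setOf_eq] at *
    rw [inner_add_left, Complex.add_re, ha k hk, hb k hk, add_zero]
  zero_mem' := by intro k hk; simp
  smul_mem' := by
    intro c v hv k hk
    simp only [Set.mem_setOf_eq] at *
    have h : (c • v : E) = ((c : ℂ)) • v := by
      simp [Complex.coe_smul]
    rw [h, inner_smul_left]
    simp [hv k hk]

/-- A standard subspace: closed, cyclic and separating real subspace. -/
structure IsStandardSubspace (H : Submodule ℝ E) : Prop where
  isClosed : IsClosed (H : Set E)
  cyclic : Dense ((cspan H : Submodule ℝ E) : Set E)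
  separating : H ⊓ H.map (mulI E) = ⊥

/-- Scalar multiplication by a complex number as a real-linear map. -/
noncomputable def smulC (E : Type*) [NormedAddCommGroup E] [InnerProductSpace ℂ E]
    (mu : ℂ) : E →ₗ[ℝ] E where
  toFun x := mu • x
  map_add' := fun x y => smul_add mu x y
  map_smul' := fun r x => smul_comm mu r x


lemma mem_cspan_iff {E : Type*} [NormedAddCommGroup E] [InnerProductSpace ℂ E]
    (H : Submodule ℝ E) (v : E) :
    v ∈ cspan H ↔ ∃ a ∈ H, ∃ b ∈ H, v = a + Complex.I • b := by
  constructor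
  · intro hv
    rcases Submodule.mem_sup.1 hv with ⟨a, ha, z, hz, rfl⟩
    rcases hz with ⟨b, hb, rfl⟩
    exact ⟨a, ha, b, hb, rfl⟩
  · rintro ⟨a, ha, b, hb, rfl⟩
    exact Submodule.add_mem _ (Submodule.mem_sup_left ha)
      (Submodule.mem_sup_right ⟨b, hb, rfl⟩)

/-- If the modular operator of a standard subspace `H` is bounded (expressed via boundedness
of the sesquilinear form `(v,w) ↦ ⟪S v, S w⟫ = ⟪w, Δ_H v⟫` of `Δ_H = S_H* S_H`), then
`H + iH = ℋ` and every standard subspace `K ⊇ H` equals `H`. -/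
theorem stmt0 {E : Type*} [NormedAddCommGroup E] [InnerProductSpace ℂ E] [CompleteSpace E]
    (H : Submodule ℝ E) (hH : IsStandardSubspace H)
    (S : E → E)
    (hS : ∀ h₁ ∈ H, ∀ h₂ ∈ H, S (h₁ + Complex.I • h₂) = h₁ - Complex.I • h₂)
    (hbdd : ∃ C : ℝ, ∀ v ∈ (cspan H : Submodule ℝ E), ∀ w ∈ (cspan H : Submodule ℝ E),
      ‖(inner ℂ (S v) (S w) : ℂ)‖ ≤ C * ‖v‖ * ‖w‖) :
    (cspan H : Submodule ℝ E) = ⊤ ∧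
      ∀ K : Submodule ℝ E, IsStandardSubspace K → H ≤ K → K = H := by
  obtain ⟨C, hC⟩ := hbdd
  set C' := max C 0 with hC'def
  have hC'0 : 0 ≤ C' := le_max_right _ _
  set M := (1 + Real.sqrt C') / 2 with hMdef
  have hM0 : 0 < M := by positivity
  -- Key norm estimate for decompositions
  have key : ∀ a ∈ H, ∀ b ∈ H, ‖a‖ ≤ M * ‖a + Complex.I • b‖ ∧
      ‖b‖ ≤ M * ‖a + Complex.I • b‖ := by
    intro a ha b hb
    set u := a + Complex.I • b with hu
    have hum : u ∈ cspan H := (mem_cspan_iff H u).2 ⟨a, ha, b, hb, rfl⟩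
    have hSu : S u = a - Complex.I • b := hS a ha b hb
    have h1 : ‖S u‖ ^ 2 ≤ C' * ‖u‖ ^ 2 := by
      have h := hC u hum u hum
      rw [inner_self_eq_norm_sq_to_K] at h
      rw [norm_pow, RCLike.norm_ofReal, abs_norm] at h
      calc ‖S u‖ ^ 2 ≤ C * ‖u‖ * ‖u‖ := h
        _ ≤ C' * ‖u‖ ^ 2 := by
            have : C ≤ C' := le_max_left _ _
            nlinarith [norm_nonneg u, sq_nonneg (‖u‖)]
    have hSle : ‖S u‖ ≤ Real.sqrt C' * ‖u‖ := by
      have := Real.sqrt_le_sqrt h1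
      rwa [Real.sqrt_sq (norm_nonneg _), Real.sqrt_mul hC'0,
        Real.sqrt_sq (norm_nonneg _)] at this
    have ha2 : u + S u = a + a := by rw [hu, hSu]; abel
    have hb2 : u - S u = Complex.I • b + Complex.I • b := by rw [hu, hSu]; abel
    have hna : 2 * ‖a‖ = ‖u + S u‖ := by
      rw [ha2]
      have : a + a = (2 : ℝ) • a := (two_smul ℝ a).symm
      rw [this, norm_smul]
      simp
    have hnb : 2 * ‖b‖ = ‖u - S u‖ := by
      rw [hb2]
      have : Complex.I • b + Complex.I • b = (2 : ℝ) • (Complex.I • b) :=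
        (two_smul ℝ _).symm
      rw [this, norm_smul, norm_smul]
      simp
    constructor
    · have h3 : ‖u + S u‖ ≤ ‖u‖ + ‖S u‖ := norm_add_le _ _
      have h4 : ‖u‖ + ‖S u‖ ≤ (1 + Real.sqrt C') * ‖u‖ := by nlinarith
      rw [hMdef]; nlinarith
    · have h3 : ‖u - S u‖ ≤ ‖u‖ + ‖S u‖ := norm_sub_le _ _
      have h4 : ‖u‖ + ‖S u‖ ≤ (1 + Real.sqrt C') * ‖u‖ := by nlinarith
      rw [hMdef]; nlinarith
  -- cspan H is closed
  have hclosed : IsClosed ((cspan H : Submodule ℝ E) : Set E) := by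
    apply IsSeqClosed.isClosed
    intro u v hu hv
    have hdec : ∀ n, ∃ a ∈ H, ∃ b ∈ H, u n = a + Complex.I • b :=
      fun n => (mem_cspan_iff H _).1 (hu n)
    choose a ha b hb huab using hdec
    have hcu : CauchySeq u := hv.cauchySeq
    have hdiff : ∀ m n, ‖a m - a n‖ ≤ M * ‖u m - u n‖ ∧
        ‖b m - b n‖ ≤ M * ‖u m - u n‖ := by
      intro m n
      have hmem : a m - a n ∈ H := H.sub_mem (ha m) (ha n)
      have hmem' : b m - b n ∈ H := H.sub_mem (hb m) (hb n)
      have heq : u m - u n = (a m - a n) + Complex.I • (b m - b n) := by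
        rw [huab m, huab n, smul_sub]; abel
      have := key _ hmem _ hmem'
      rwa [← heq] at this
    have hcauchy : ∀ (c : ℕ → E), (∀ m n, ‖c m - c n‖ ≤ M * ‖u m - u n‖) →
        CauchySeq c := by
      intro c hc
      rw [Metric.cauchySeq_iff] at hcu ⊢
      intro ε hε
      obtain ⟨N, hN⟩ := hcu (ε / M) (by positivity)
      refine ⟨N, fun m hm n hn => ?_⟩
      have h1 : dist (c m) (c n) ≤ M * dist (u m) (u n) := by
        rw [dist_eq_norm, dist_eq_norm]; exact hc m n
      calc dist (c m) (c n) ≤ M * dist (u m) (u n) := h1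
        _ < M * (ε / M) := by
            exact mul_lt_mul_of_pos_left (hN m hm n hn) hM0
        _ = ε := by field_simp
    have hca : CauchySeq a := hcauchy a (fun m n => (hdiff m n).1)
    have hcb : CauchySeq b := hcauchy b (fun m n => (hdiff m n).2)
    obtain ⟨p, hp⟩ := cauchySeq_tendsto_of_complete hca
    obtain ⟨q, hq⟩ := cauchySeq_tendsto_of_complete hcb
    have hpH : p ∈ H := hH.isClosed.mem_of_tendsto hp
      (Filter.Eventually.of_forall ha)
    have hqH : q ∈ H := hH.isClosed.mem_of_tendsto hq
      (Filter.Eventually.of_forall hb)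
    have hlim : Tendsto (fun n => a n + Complex.I • b n) atTop
        (𝓝 (p + Complex.I • q)) := hp.add (hq.const_smul _)
    have hlim' : Tendsto u atTop (𝓝 (p + Complex.I • q)) :=
      Tendsto.congr (fun n => (huab n).symm) hlim
    have hv' : v = p + Complex.I • q := tendsto_nhds_unique hv hlim'
    exact (mem_cspan_iff H v).2 ⟨p, hpH, q, hqH, hv'⟩
  have hcoe : ((cspan H : Submodule ℝ E) : Set E) = Set.univ := by
    rw [← hclosed.closure_eq]
    exact hH.cyclic.closure_eq
  have htop : (cspan H : Submodule ℝ E) = ⊤ := by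
    refine Submodule.eq_top_iff'.2 fun x => ?_
    have : x ∈ ((cspan H : Submodule ℝ E) : Set E) := by rw [hcoe]; trivial
    exact this
  refine ⟨htop, fun K hK hHK => ?_⟩
  refine le_antisymm (fun k hk => ?_) hHK
  have hkc : k ∈ cspan H := by rw [htop]; trivial
  obtain ⟨x, hx, y, hy, rfl⟩ := (mem_cspan_iff H k).1 hkc
  have h1 : Complex.I • y ∈ K := by
    have := K.sub_mem hk (hHK hx)
    simpa using this
  have h2 : Complex.I • y ∈ K.map (mulI E) := ⟨y, hHK hy, rfl⟩
  have h3 : Complex.I • y ∈ (⊥ : Submodule ℝ E) := by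
    rw [← hK.separating]
    exact Submodule.mem_inf.2 ⟨h1, h2⟩
  have h4 : Complex.I • y = 0 := (Submodule.mem_bot ℝ).1 h3
  have hy0 : y = 0 := by
    rcases smul_eq_zero.1 h4 with h | h
    · exact absurd h Complex.I_ne_zero
    · exact h
  simpa [hy0] using hx
end

section
/- Let K be a standard subspace of ℋ that is a factor (K ∩ K′ = {0}), and suppose there exists a vector v ∈ ℋ with v ∉ (K + iK) ∪ (K + K′). Then H := K + ℝv is a standard subspace properly containing K with trivial relative symplectic complement: K′ ∩ H = {0}. -/
open Complex Submodule Filter Topology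

variable {E : Type*} [NormedAddCommGroup E] [InnerProductSpace ℂ E]

lemma mem_cspan_of_mem {K : Submodule ℝ E} {x : E} (hx : x ∈ K) : x ∈ cspan K :=
  Submodule.mem_sup_left hx

lemma mulI_mem_cspan {K : Submodule ℝ E} {x : E} (hx : x ∈ cspan K) :
    mulI E x ∈ cspan K := by
  rcases Submodule.mem_sup.1 hx with ⟨a, ha, b, hb, rfl⟩
  rcases Submodule.mem_map.1 hb with ⟨c, hc, rfl⟩
  have h1 : mulI E (a + mulI E c) = mulI E a + (-c) := by
    simp only [map_add, mulI]
    simp [smul_smul, Complex.I_mul_I]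
  rw [h1]
  exact Submodule.add_mem _ (Submodule.mem_sup_right (Submodule.mem_map_of_mem ha))
    (Submodule.mem_sup_left (Submodule.neg_mem _ hc))

lemma smul_mem_cspan {K : Submodule ℝ E} (μ : ℂ) {x : E} (hx : x ∈ cspan K) :
    μ • x ∈ cspan K := by
  have h : μ • x = μ.re • x + μ.im • (mulI E x) := by
    show μ • x = μ.re • x + μ.im • (Complex.I • x)
    rw [← Complex.coe_smul, ← Complex.coe_smul, smul_smul, ← add_smul]
    congr 1
    simp [Complex.ext_iff]
  rw [h]
  exact Submodule.add_mem _ (Submodule.smul_mem _ _ hx)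
    (Submodule.smul_mem _ _ (mulI_mem_cspan hx))

lemma isClosed_sup_span' {E : Type*} [NormedAddCommGroup E] [NormedSpace ℝ E]
    (K : Submodule ℝ E) (hK : IsClosed (K : Set E)) (v : E) :
    IsClosed ((K ⊔ Submodule.span ℝ {v} : Submodule ℝ E) : Set E) := by
  haveI : IsClosed ((K : Set E)) := hK
  haveI : NormedAddCommGroup (E ⧸ K) := Submodule.Quotient.normedAddCommGroup K
  have hcont : Continuous K.mkQ :=
    AddMonoidHomClass.continuous_of_bound K.mkQ 1
      (fun x => by simpa using Submodule.Quotient.norm_mk_le K x)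
  have heq : K ⊔ Submodule.span ℝ {v} =
      (Submodule.span ℝ {K.mkQ v}).comap K.mkQ := by
    rw [← Set.image_singleton, ← Submodule.map_span, Submodule.comap_map_eq,
      Submodule.ker_mkQ, sup_comm]
  rw [heq]
  have hfd : IsClosed ((Submodule.span ℝ {K.mkQ v} : Submodule ℝ (E ⧸ K)) : Set (E ⧸ K)) :=
    Submodule.closed_of_finiteDimensional _
  exact hfd.preimage hcont


/-- Extending a factor standard subspace `K` by a vector outside `(K + iK) ∪ (K + K')`
yields a proper standard extension with trivial relative symplectic complement. -/
theorem stmt2 {E : Type*} [NormedAddCommGroup E] [InnerProductSpace ℂ E] [CompleteSpace E]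
    (K : Submodule ℝ E) (hK : IsStandardSubspace K)
    (hfactor : K ⊓ sympl K = ⊥)
    (v : E)
    (hv : v ∉ ((cspan K : Submodule ℝ E) : Set E) ∪ ((K ⊔ sympl K : Submodule ℝ E) : Set E)) :
    IsStandardSubspace (K ⊔ Submodule.span ℝ {v}) ∧
      K < K ⊔ Submodule.span ℝ {v} ∧
      sympl K ⊓ (K ⊔ Submodule.span ℝ {v}) = ⊥ := by
  have hv1 : v ∉ cspan K := fun h => hv (Or.inl h)
  have hv2 : v ∉ (K ⊔ sympl K : Submodule ℝ E) := fun h => hv (Or.inr h)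
  refine ⟨⟨isClosed_sup_span' K hK.isClosed v, ?_, ?_⟩, ?_, ?_⟩
  · refine hK.cyclic.mono ?_
    exact SetLike.coe_subset_coe.2
      (sup_le_sup le_sup_left (Submodule.map_mono le_sup_left))
  · rw [eq_bot_iff]
    rintro x ⟨hx1, hx2⟩
    rcases Submodule.mem_map.1 hx2 with ⟨y, hy, rfl⟩
    rcases Submodule.mem_sup.1 hx1 with ⟨k1, hk1, s1, hs1, hx⟩
    rcases Submodule.mem_span_singleton.1 hs1 with ⟨a, rfl⟩
    rcases Submodule.mem_sup.1 hy with ⟨k2, hk2, s2, hs2, rfl⟩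
    rcases Submodule.mem_span_singleton.1 hs2 with ⟨b, rfl⟩
    have key : ((a : ℂ) - (b : ℂ) * Complex.I) • v = mulI E k2 - k1 := by
      have hmul : mulI E (k2 + b • v) = Complex.I • k2 + b • (Complex.I • v) := by
        show Complex.I • (k2 + b • v) = _
        rw [smul_add, smul_comm]
      rw [hmul] at hx
      have h2 : ((a : ℂ) - (b : ℂ) * Complex.I) • v = a • v - b • (Complex.I • v) := by
        rw [sub_smul, mul_smul, ← Complex.coe_smul, ← Complex.coe_smul]
      have hmk2 : mulI E k2 = Complex.I • k2 := rfl
      have h3 : Complex.I • k2 = k1 + a • v - b • (Complex.I • v) :=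
        eq_sub_of_add_eq hx.symm
      rw [h2, hmk2, h3]
      abel
    have hμv : ((a : ℂ) - (b : ℂ) * Complex.I) • v ∈ cspan K := by
      rw [key]
      exact Submodule.sub_mem _
        (Submodule.mem_sup_right (Submodule.mem_map_of_mem hk2))
        (Submodule.mem_sup_left hk1)
    by_cases hμ : ((a : ℂ) - (b : ℂ) * Complex.I) = 0
    · have ha : a = 0 := by
        have := congrArg Complex.re hμ
        simpa using this
      have hb : b = 0 := by
        have := congrArg Complex.im hμ
        simpa using this
      subst ha hb
      have hxK : mulI E (k2 + (0:ℝ) • v) ∈ K := by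
        rw [← hx]; simpa using hk1
      have hxiK : mulI E (k2 + (0:ℝ) • v) ∈ K.map (mulI E) := by
        refine Submodule.mem_map_of_mem ?_
        simpa using hk2
      have : mulI E (k2 + (0:ℝ) • v) ∈ K ⊓ K.map (mulI E) := ⟨hxK, hxiK⟩
      rw [hK.separating] at this
      exact this
    · exfalso
      apply hv1
      have : (((a : ℂ) - (b : ℂ) * Complex.I)⁻¹ * ((a : ℂ) - (b : ℂ) * Complex.I)) • v
          ∈ cspan K := by
        rw [mul_smul]
        exact smul_mem_cspan _ hμv
      rwa [inv_mul_cancel₀ hμ, one_smul] at this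
  · refine lt_of_le_of_ne le_sup_left ?_
    intro h
    apply hv2
    have hvH : v ∈ K ⊔ Submodule.span ℝ {v} :=
      Submodule.mem_sup_right (Submodule.mem_span_singleton_self v)
    rw [← h] at hvH
    exact Submodule.mem_sup_left hvH
  · rw [eq_bot_iff]
    rintro x ⟨hxs, hxH⟩
    rcases Submodule.mem_sup.1 hxH with ⟨k, hk, s, hs, rfl⟩
    rcases Submodule.mem_span_singleton.1 hs with ⟨a, rfl⟩
    by_cases ha : a = 0
    · subst ha
      have : k + (0:ℝ) • v ∈ K ⊓ sympl K := by
        refine ⟨by simpa using hk, hxs⟩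
      rw [hfactor] at this
      exact this
    · exfalso
      apply hv2
      have : v = a⁻¹ • (k + a • v) - a⁻¹ • k := by
        rw [smul_add, smul_smul, inv_mul_cancel₀ ha, one_smul]
        abel
      rw [this]
      exact Submodule.sub_mem _
        (Submodule.mem_sup_right (Submodule.smul_mem _ _ hxs))
        (Submodule.mem_sup_left (Submodule.smul_mem _ _ hk))
end

section
/- Let H be a standard subspace with polarizer D_H (the bounded real-linear operator on H with Im⟨h,k⟩ = Re⟨h, D_H k⟩ for all h,k ∈ H), and let K ⊆ H be a standard subspace with real-orthogonal projection E_K onto K. Then K′ ∩ H = ker(E_K D_H) and H decomposes as the real-orthogonal direct sum H = (K′ ∩ H) ⊕ closure(D_H K). -/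
open Complex Submodule Filter Topology

variable {E : Type*} [NormedAddCommGroup E] [InnerProductSpace ℂ E]

/-- For an inclusion `K ⊆ H` of standard subspaces, with `D` the polarizer of `H` and
`EK` the real-orthogonal projection onto `K`: `K' ∩ H = ker (EK ∘ D)` and
`H = (K' ∩ H) ⊕ᵣ closure (D K)` as a real-orthogonal direct sum. -/
theorem stmt5 {E : Type*} [NormedAddCommGroup E] [InnerProductSpace ℂ E] [CompleteSpace E]
    (H K : Submodule ℝ E) (hH : IsStandardSubspace H) (hK : IsStandardSubspace K)
    (hKH : K ≤ H)
    (D : E →L[ℝ] E) (hDmem : ∀ h ∈ H, D h ∈ H)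
    (hDpol : ∀ h ∈ H, ∀ k ∈ H, (inner ℂ h k : ℂ).im = (inner ℂ h (D k) : ℂ).re)
    (EK : E →L[ℝ] E) (hEKmem : ∀ v : E, EK v ∈ K) (hEKfix : ∀ k ∈ K, EK k = k)
    (hEKsa : ∀ v w : E, (inner ℂ (EK v) w : ℂ).re = (inner ℂ v (EK w) : ℂ).re) :
    ((sympl K ⊓ H : Submodule ℝ E) : Set E) = {h : E | h ∈ H ∧ EK (D h) = 0} ∧
    (∀ x ∈ sympl K ⊓ H, ∀ y ∈ closure (D '' (K : Set E)), (inner ℂ x y : ℂ).re = 0) ∧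
    (∀ h ∈ H, ∃ x ∈ sympl K ⊓ H, ∃ y ∈ closure (D '' (K : Set E)), h = x + y) := by
  have mem_sympl : ∀ x : E, x ∈ sympl K ↔ ∀ k ∈ K, (inner ℂ x k : ℂ).im = 0 :=
    fun _ => Iff.rfl
  -- re is symmetric, im antisymmetric
  have re_symm : ∀ x y : E, (inner ℂ x y : ℂ).re = (inner ℂ y x : ℂ).re := by
    intro x y
    rw [← inner_conj_symm (𝕜 := ℂ) x y, Complex.conj_re]
  have im_antisymm : ∀ x y : E, (inner ℂ x y : ℂ).im = -(inner ℂ y x : ℂ).im := by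
    intro x y
    rw [← inner_conj_symm (𝕜 := ℂ) x y, Complex.conj_im]
  -- key: EK v = 0 iff v is re-orthogonal to K
  have key : ∀ v : E, EK v = 0 ↔ ∀ k ∈ K, (inner ℂ v k : ℂ).re = 0 := by
    intro v
    constructor
    · intro h0 k hk
      have h1 := hEKsa v k
      rw [h0, hEKfix k hk] at h1
      simpa using h1.symm
    · intro hperp
      have h1 : (inner ℂ (EK v) (EK v) : ℂ).re = 0 := by
        rw [hEKsa v (EK v), hEKfix _ (hEKmem v), hperp _ (hEKmem v)]
      have h2 : (inner ℂ (EK v) (EK v) : ℂ) = 0 := by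
        apply Complex.ext
        · simpa using h1
        · simpa using (congrArg Complex.im (inner_self_ofReal_re (𝕜 := ℂ) (EK v))).symm
      exact inner_self_eq_zero.mp h2
  -- polarizer: for h ∈ H, k ∈ K, im ⟨h,k⟩ = - re ⟨D h, k⟩
  have pol : ∀ h ∈ H, ∀ k ∈ K, (inner ℂ h k : ℂ).im = -(inner ℂ (D h) k : ℂ).re := by
    intro h hh k hk
    rw [im_antisymm, hDpol k (hKH hk) h hh, re_symm]
  refine ⟨?_, ?_, ?_⟩
  · ext h
    simp only [Submodule.mem_inf, SetLike.mem_coe, Set.mem_setOf_eq]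
    constructor
    · rintro ⟨hs, hh⟩
      refine ⟨hh, (key (D h)).mpr fun k hk => ?_⟩
      have := pol h hh k hk
      rw [(mem_sympl h).mp hs k hk] at this
      linarith
    · rintro ⟨hh, h0⟩
      refine ⟨(mem_sympl h).mpr fun k hk => ?_, hh⟩
      rw [pol h hh k hk, (key (D h)).mp h0 k hk, neg_zero]
  · rintro x ⟨hxs, hxH⟩ y hy
    have hcl : closure (D '' (K : Set E)) ⊆ {y : E | (inner ℂ x y : ℂ).re = 0} := by
      apply closure_minimal
      · rintro _ ⟨k, hk, rfl⟩
        simp only [Set.mem_setOf_eq]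
        rw [← hDpol x hxH k (hKH hk)]
        exact (mem_sympl x).mp hxs k hk
      · have hc : Continuous fun y : E => (inner ℂ x y : ℂ).re :=
          Complex.continuous_re.comp (continuous_const.inner continuous_id)
        exact isClosed_eq hc continuous_const
    exact hcl hy
  · intro h hh
    letI : InnerProductSpace ℝ E := InnerProductSpace.complexToReal
    set M : Submodule ℝ E := (K.map (D : E →ₗ[ℝ] E)).topologicalClosure with hM
    have hMset : (M : Set E) = closure (D '' (K : Set E)) := by
      rw [hM, Submodule.topologicalClosure_coe, Submodule.map_coe,
        ContinuousLinearMap.coe_coe]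
    haveI : CompleteSpace M :=
      (Submodule.isClosed_topologicalClosure _).completeSpace_coe
    obtain ⟨y, hy, z, hz, hdecomp⟩ := M.exists_add_mem_mem_orthogonal h
    have hyH : y ∈ H := by
      have hsub : (M : Set E) ⊆ (H : Set E) := by
        rw [hMset]
        apply closure_minimal _ hH.isClosed
        rintro _ ⟨k, hk, rfl⟩
        exact hDmem k (hKH hk)
      exact hsub hy
    have hzH : z ∈ H := by
      have : z = h - y := by rw [hdecomp]; abel
      rw [this]; exact H.sub_mem hh hyH
    refine ⟨z, ⟨?_, hzH⟩, y, ?_, by rw [hdecomp]; abel⟩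
    · intro k hk
      rw [hDpol z hzH k (hKH hk)]
      have hDk : D k ∈ M := Submodule.le_topologicalClosure _ ⟨k, hk, rfl⟩
      have := (Submodule.mem_orthogonal M z).mp hz (D k) hDk
      rw [real_inner_eq_re_inner ℂ] at this
      rw [re_symm]
      exact this
    · rw [← hMset]; exact hy
end

section
/- Let K ⊆ H be an inclusion of standard subspaces with H a factor, and assume D_H K is closed. Then (K′ ∩ H)′ ∩ D_H K = K ∩ D_H K. -/
open Complex Submodule Filter Topology

variable {E : Type*} [NormedAddCommGroup E] [InnerProductSpace ℂ E]

/-- If `H` is a factor and `D_H K` is closed, then `(K' ∩ H)' ∩ D_H K = K ∩ D_H K`. -/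
theorem stmt6 {E : Type*} [NormedAddCommGroup E] [InnerProductSpace ℂ E] [CompleteSpace E]
    (H K : Submodule ℝ E) (hH : IsStandardSubspace H) (hK : IsStandardSubspace K)
    (hKH : K ≤ H) (hfac : H ⊓ sympl H = ⊥)
    (D : E →L[ℝ] E) (hDmem : ∀ h ∈ H, D h ∈ H)
    (hDpol : ∀ h ∈ H, ∀ k ∈ H, (inner ℂ h k : ℂ).im = (inner ℂ h (D k) : ℂ).re)
    (hclosed : IsClosed (D '' (K : Set E))) :
    ((sympl (sympl K ⊓ H) : Submodule ℝ E) : Set E) ∩ (D '' (K : Set E))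
      = (K : Set E) ∩ (D '' (K : Set E)) := by
  letI : InnerProductSpace ℝ E := InnerProductSpace.complexToReal
  have hre : ∀ x y : E, (inner ℝ x y) = (inner ℂ x y).re := fun _ _ => rfl
  -- antisymmetry of the imaginary part
  have ham : ∀ x y : E, (inner ℂ x y).im = -(inner ℂ y x).im := by
    intro x y
    rw [← inner_conj_symm x y, Complex.conj_im]
  -- D is injective on H
  have hinj : ∀ h ∈ H, D h = 0 → h = 0 := by
    intro h hh hDh
    have hmem : h ∈ H ⊓ sympl H := by
      refine ⟨hh, fun k hk => ?_⟩
      rw [ham h k]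
      have := hDpol k hk h hh
      rw [hDh] at this
      simp only [inner_zero_right, Complex.zero_re] at this
      rw [this, neg_zero]
    rw [hfac] at hmem
    exact hmem
  set L : Submodule ℝ E := K.map (D : E →ₗ[ℝ] E) with hL
  have hLset : (L : Set E) = D '' (K : Set E) := by
    simp [hL, Submodule.map_coe]
  have hLH : ∀ x ∈ L, x ∈ H := by
    rintro x ⟨k, hk, rfl⟩
    exact hDmem k (hKH hk)
  -- sympl K ⊓ H ⊆ Lᗮ
  have hMsub : ∀ v ∈ sympl K ⊓ H, v ∈ Lᗮ := by
    rintro v ⟨hv1, hv2⟩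
    refine (Submodule.mem_orthogonal L v).mpr ?_
    rintro u ⟨k, hk, rfl⟩
    have hco : ((D : E →ₗ[ℝ] E) k) = D k := rfl
    rw [hco, real_inner_comm, hre, ← hDpol v hv2 k (hKH hk)]
    exact hv1 k hk
  -- Lᗮ ∩ H ⊆ sympl K ⊓ H
  have hMsup : ∀ v ∈ H, v ∈ Lᗮ → v ∈ sympl K ⊓ H := by
    intro v hvH hvperp
    refine ⟨fun k hk => ?_, hvH⟩
    rw [hDpol v hvH k (hKH hk), ← hre, real_inner_comm]
    exact (Submodule.mem_orthogonal L v).mp hvperp ((D : E →ₗ[ℝ] E) k) ⟨k, hk, rfl⟩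
  haveI : CompleteSpace L := (hLset ▸ hclosed).completeSpace_coe
  ext x
  simp only [Set.mem_inter_iff, SetLike.mem_coe]
  constructor
  · rintro ⟨hx, hxDK⟩
    refine ⟨?_, hxDK⟩
    have hxL : x ∈ L := by rw [← hLset] at hxDK; exact hxDK
    have hxH : x ∈ H := hLH x hxL
    set w : E := D x with hw
    have hwH : w ∈ H := hDmem x hxH
    -- w ∈ (sympl K ⊓ H)ᗮ
    have hwperp : ∀ v ∈ sympl K ⊓ H, (inner ℝ v w) = 0 := by
      intro v hv
      rw [hre, ← hDpol v hv.2 x hxH, ham v x]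
      rw [hx v hv, neg_zero]
    -- orthogonal decomposition of w along L
    set a : E := (orthogonalProjection L w : E) with ha
    have haL : a ∈ L := (orthogonalProjection L w).2
    have hbperp : w - a ∈ Lᗮ := by exact sub_starProjection_mem_orthogonal (K := L) w
    have hbH : w - a ∈ H := H.sub_mem hwH (hLH a haL)
    have hbM : w - a ∈ sympl K ⊓ H := hMsup _ hbH hbperp
    -- w - a is orthogonal to itself
    have hb0 : w - a = 0 := by
      have h1 : (inner ℝ (w - a) w) = 0 := hwperp _ hbM
      have h2 : (inner ℝ (w - a) a) = 0 := by
        rw [real_inner_comm]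
        exact (Submodule.mem_orthogonal L (w - a)).mp hbperp a haL
      have : (inner ℝ (w - a) (w - a)) = 0 := by
        rw [inner_sub_right, h1, h2, sub_zero]
      exact inner_self_eq_zero.mp this
    have hwL : w ∈ L := by
      have : w = a := by rw [← sub_eq_zero]; exact hb0
      rw [this]; exact haL
    rcases hwL with ⟨k', hk', hk'eq⟩
    have hdiff : x - k' = 0 := by
      refine hinj _ (H.sub_mem hxH (hKH hk')) ?_
      rw [map_sub]
      change D x - D k' = 0
      rw [← hw]
      have : (D : E →ₗ[ℝ] E) k' = D k' := rfl
      rw [this] at hk'eq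
      rw [hk'eq, sub_self]
    have : x = k' := by rwa [sub_eq_zero] at hdiff
    rw [this]; exact hk'
  · rintro ⟨hxK, hxDK⟩
    refine ⟨fun v hv => ?_, hxDK⟩
    rw [ham x v, hv.1 x hxK, neg_zero]
end

section
/- Let K ⊆ H be standard subspaces and D_H the polarizer of H. Then K ∩ D_H K ∩ Dom(Δ_H) ⊆ K ∩ (iK + iH′) ⊆ K ∩ D_H K. -/
open Complex Submodule Filter Topology

variable {E : Type*} [NormedAddCommGroup E] [InnerProductSpace ℂ E]

/-- `K ∩ D_H K ∩ Dom Δ_H ⊆ K ∩ (iK + iH') ⊆ K ∩ D_H K`, where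
`Dom Δ_H = {v ∈ H + iH : S_H v ∈ H' + iH'}`. -/
theorem stmt7 {E : Type*} [NormedAddCommGroup E] [InnerProductSpace ℂ E] [CompleteSpace E]
    (H K : Submodule ℝ E) (hH : IsStandardSubspace H) (hK : IsStandardSubspace K)
    (hKH : K ≤ H)
    (S : E → E)
    (hS : ∀ h₁ ∈ H, ∀ h₂ ∈ H, S (h₁ + Complex.I • h₂) = h₁ - Complex.I • h₂)
    (D : E →L[ℝ] E) (hDmem : ∀ h ∈ H, D h ∈ H)
    (hDpol : ∀ h ∈ H, ∀ k ∈ H, (inner ℂ h k : ℂ).im = (inner ℂ h (D k) : ℂ).re)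
    (domDelta : Set E)
    (hdom : domDelta = {v : E | v ∈ (cspan H : Submodule ℝ E) ∧
        S v ∈ (cspan (sympl H) : Submodule ℝ E)}) :
    ((K : Set E) ∩ (D '' (K : Set E)) ∩ domDelta
        ⊆ (K : Set E) ∩ ((K.map (mulI E) ⊔ (sympl H).map (mulI E) : Submodule ℝ E) : Set E)) ∧
    ((K : Set E) ∩ ((K.map (mulI E) ⊔ (sympl H).map (mulI E) : Submodule ℝ E) : Set E)
        ⊆ (K : Set E) ∩ (D '' (K : Set E))) := by

  have mulI_apply : ∀ x : E, mulI E x = Complex.I • x := fun _ => rfl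
  constructor
  · rintro v ⟨⟨hvK, u, huK, huv⟩, -⟩
    refine ⟨hvK, ?_⟩
    have hwH' : (u - Complex.I • v) ∈ sympl H := by
      intro h hh
      have key : (inner ℂ u h : ℂ).im = -(inner ℂ (D u) h : ℂ).re := by
        have h1 := hDpol h hh u (hKH huK)
        rw [← inner_conj_symm h u, ← inner_conj_symm h (D u)] at h1
        simp only [Complex.conj_im, Complex.conj_re] at h1
        linarith
      rw [inner_sub_left, inner_smul_left]
      simp only [Complex.sub_im, Complex.mul_im, Complex.conj_re, Complex.conj_im,
        Complex.I_re, Complex.I_im]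
      rw [key, ← huv]
      ring
    refine Submodule.mem_sup.mpr ⟨mulI E (-u), Submodule.mem_map_of_mem (neg_mem huK),
      mulI E (u - Complex.I • v), Submodule.mem_map_of_mem hwH', ?_⟩
    rw [mulI_apply, mulI_apply]
    rw [smul_sub, smul_smul, Complex.I_mul_I, smul_neg, neg_one_smul]
    abel
  · rintro v ⟨hvK, hmem⟩
    obtain ⟨y, hy, z, hz, hyz⟩ := Submodule.mem_sup.mp hmem
    obtain ⟨k, hkK, rfl⟩ := Submodule.mem_map.mp hy
    obtain ⟨w, hwH', rfl⟩ := Submodule.mem_map.mp hz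
    rw [mulI_apply, mulI_apply] at hyz
    refine ⟨hvK, -k, neg_mem hkK, ?_⟩
    have hx : v + D k = 0 := by
      set x : E := v + D k with hxdef
      have hxH : x ∈ H := H.add_mem (hKH hvK) (hDmem k (hKH hkK))
      have hre : ∀ h ∈ H, (inner ℂ h x : ℂ).re = 0 := by
        intro h hh
        have hpol : (inner ℂ h k : ℂ).im = (inner ℂ h (D k) : ℂ).re := hDpol h hh k (hKH hkK)
        have hw : (inner ℂ w h : ℂ).im = 0 := hwH' h hh
        have hw2 : (inner ℂ h w : ℂ).im = 0 := by
          have hcw : (inner ℂ h w : ℂ) = starRingEnd ℂ (inner ℂ w h) := (inner_conj_symm h w).symm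
          rw [hcw, Complex.conj_im, hw, neg_zero]
        have hv : (inner ℂ h v : ℂ) = inner ℂ h (Complex.I • k) + inner ℂ h (Complex.I • w) := by
          rw [← inner_add_right, hyz]
        rw [hxdef, inner_add_right, hv, inner_smul_right, inner_smul_right]
        simp only [Complex.add_re, Complex.mul_re, Complex.I_re, Complex.I_im]
        rw [← hpol]
        rw [hw2]
        ring
      have him : (inner ℂ x x : ℂ).im = 0 := by
        rw [← Complex.ofReal_im (inner ℂ x x : ℂ).re]
        congr 1
        exact Eq.symm (inner_self_ofReal_re x)
      have hre2 : (inner ℂ x x : ℂ).re = 0 := hre x hxH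
      have : (inner ℂ x x : ℂ) = 0 := Complex.ext hre2 him
      exact inner_self_eq_zero.mp this
    have : v = -(D k) := by linear_combination (norm := module) hx
    rw [map_neg, ← this]
end

section
/- Let H be a standard subspace and (U_n) a sequence of unitaries with U_n H ⊆ H, U_{n+1}H ⊆ U_n H for all n, and such that U_n converges in the weak operator topology to a unitary U with UH ⊆ H. Then ⋂_n U_n H = UH. -/
open Complex Submodule Filter Topology

variable {E : Type*} [NormedAddCommGroup E] [InnerProductSpace ℂ E]

section Aux

attribute [local instance] InnerProductSpace.complexToReal

/-- A closed real subspace is weakly sequentially closed. -/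
lemma weak_closed_aux8 [CompleteSpace E] (K : Submodule ℝ E) (hcl : IsClosed (K : Set E))
    (x : ℕ → E) (hx : ∀ n, x n ∈ K) (z : E)
    (hz : ∀ y : E, Tendsto (fun n => (inner ℂ y (x n) : ℂ)) atTop (nhds (inner ℂ y z))) :
    z ∈ K := by
  haveI : CompleteSpace K := hcl.completeSpace_coe
  rw [← Submodule.orthogonal_orthogonal K, Submodule.mem_orthogonal]
  intro u hu
  have h0 : ∀ n, (inner ℝ u (x n) : ℝ) = 0 := fun n =>
    (Submodule.mem_orthogonal' K u).mp hu (x n) (hx n)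
  have ht : Tendsto (fun n => (inner ℝ u (x n) : ℝ)) atTop (nhds ((inner ℂ u z : ℂ).re)) :=
    (Complex.continuous_re.tendsto _).comp (hz u)
  have h2 : (inner ℂ u z : ℂ).re = 0 :=
    tendsto_nhds_unique ht (by simp [h0])
  exact h2

end Aux

/-- For a decreasing sequence of unitary images `U_n H` with `U_n → U` in the weak
operator topology and `UH ⊆ H`, one has `⋂ₙ U_n H = U H`. -/
theorem stmt8 {E : Type*} [NormedAddCommGroup E] [InnerProductSpace ℂ E] [CompleteSpace E]
    (H : Submodule ℝ E) (hH : IsStandardSubspace H)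
    (U : ℕ → (E ≃ₗᵢ[ℂ] E)) (Ulim : E ≃ₗᵢ[ℂ] E)
    (hUH : ∀ n, (U n) '' (H : Set E) ⊆ (H : Set E))
    (hmono : ∀ n, (U (n + 1)) '' (H : Set E) ⊆ (U n) '' (H : Set E))
    (hUlimH : Ulim '' (H : Set E) ⊆ (H : Set E))
    (hweak : ∀ x y : E,
      Filter.Tendsto (fun n => (inner ℂ x (U n y) : ℂ)) Filter.atTop (nhds (inner ℂ x (Ulim y)))) :
    (⋂ n, (U n) '' (H : Set E)) = Ulim '' (H : Set E) := by
  -- the image submodules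
  have hchain : ∀ m n, (U (n + m)) '' (H : Set E) ⊆ (U m) '' (H : Set E) := by
    intro m n
    induction n with
    | zero => simp
    | succ k ih => exact le_trans (by simpa [Nat.add_right_comm] using hmono (k + m)) ih
  apply Set.Subset.antisymm
  · -- ⋂ ⊆ Ulim '' H
    intro x hx
    simp only [Set.mem_iInter] at hx
    -- h n := (U n).symm x ∈ H
    have hh : ∀ n, (U n).symm x ∈ H := by
      intro n
      obtain ⟨h, hhH, rfl⟩ := hx n
      simpa using hhH
    -- weak convergence of (U n).symm x to Ulim.symm x
    have hz : ∀ y : E, Tendsto (fun n => (inner ℂ y ((U n).symm x) : ℂ)) atTop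
        (nhds (inner ℂ y (Ulim.symm x))) := by
      intro y
      have key : ∀ n, (inner ℂ y ((U n).symm x) : ℂ) = starRingEnd ℂ (inner ℂ x (U n y)) := by
        intro n
        rw [← inner_conj_symm]
        congr 1
        calc (inner ℂ ((U n).symm x) y : ℂ) = inner ℂ (U n ((U n).symm x)) (U n y) :=
              ((U n).inner_map_map _ _).symm
          _ = inner ℂ x (U n y) := by rw [(U n).apply_symm_apply]
      have keyl : (inner ℂ y (Ulim.symm x) : ℂ) = starRingEnd ℂ (inner ℂ x (Ulim y)) := by
        rw [← inner_conj_symm]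
        congr 1
        calc (inner ℂ (Ulim.symm x) y : ℂ) = inner ℂ (Ulim (Ulim.symm x)) (Ulim y) :=
              (Ulim.inner_map_map _ _).symm
          _ = inner ℂ x (Ulim y) := by rw [Ulim.apply_symm_apply]
      simp only [key, keyl]
      exact (Complex.continuous_conj.tendsto _).comp (hweak x y)
    have : Ulim.symm x ∈ H :=
      weak_closed_aux8 H hH.isClosed (fun n => (U n).symm x) hh _ hz
    exact ⟨Ulim.symm x, this, Ulim.apply_symm_apply x⟩
  · -- Ulim '' H ⊆ ⋂
    rintro _ ⟨h, hhH, rfl⟩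
    simp only [Set.mem_iInter]
    intro m
    -- U m '' H as real submodule
    set K : Submodule ℝ E := H.map ((U m).toLinearEquiv.restrictScalars ℝ : E →ₗ[ℝ] E) with hK
    have hKset : (K : Set E) = (U m) '' (H : Set E) := by
      ext v; simp [hK]
    have hKcl : IsClosed (K : Set E) := by
      rw [hKset]
      exact ((U m).toHomeomorph.isClosedMap) _ hH.isClosed
    have hmem : ∀ n, U (n + m) h ∈ K := by
      intro n
      rw [← SetLike.mem_coe, hKset]
      exact hchain m n ⟨h, hhH, rfl⟩
    have hz : ∀ y : E, Tendsto (fun n => (inner ℂ y (U (n + m) h) : ℂ)) atTop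
        (nhds (inner ℂ y (Ulim h))) := by
      intro y
      exact (hweak y h).comp (tendsto_add_atTop_nat m)
    have : Ulim h ∈ K := weak_closed_aux8 K hKcl (fun n => U (n + m) h) hmem _ hz
    rw [← SetLike.mem_coe, hKset] at this
    exact this
end

section
/- Let K ⊆ H be standard subspaces. If Δ_H^{1/4} E_K is not compact, then there exist sequences of unit vectors (k_n) ⊆ K and (h_n′) ⊆ H′ both converging weakly to zero such that ⟨h_n′, k_n⟩ does not converge to 0. -/
open Complex Submodule Filter Topology

variable {E : Type*} [NormedAddCommGroup E] [InnerProductSpace ℂ E]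

set_option linter.unusedSectionVars false in
theorem stmt10_key_aux {E : Type*} [NormedAddCommGroup E] [InnerProductSpace ℂ E] [CompleteSpace E]
    (K : Submodule ℝ E)
    (EK : E →L[ℝ] E) (hEKmem : ∀ v : E, EK v ∈ K)
    (T : E →L[ℝ] E)
    (hTE : ∀ v : E, T v = T (EK v))
    (hnc : ¬ IsCompactOperator (⇑T)) :
    ∃ ε > 0, ∀ s : Finset E, (↑s : Set E) ⊆ K →
      ∃ y, (y ∈ K ∧ ‖y‖ = 1 ∧ ε ≤ ‖T y‖) ∧ ∀ x ∈ s, (inner ℂ x y : ℂ).re = 0 := by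
  letI : InnerProductSpace ℝ E := InnerProductSpace.rclikeToReal ℂ E
  by_contra hcon
  push_neg at hcon
  apply hnc
  -- reformulate hcon
  have A : ∀ δ : ℝ, 0 < δ → ∃ s : Finset E, (↑s : Set E) ⊆ K ∧
      ∀ e ∈ K, (∀ x ∈ s, (inner ℂ x e : ℂ).re = 0) → ‖T e‖ ≤ δ * ‖e‖ := by
    intro δ hδ
    obtain ⟨s, hsK, hs⟩ := hcon δ hδ
    refine ⟨s, hsK, fun e heK horth => ?_⟩
    rcases eq_or_ne e 0 with rfl | hne
    · simp
    have hen : 0 < ‖e‖ := norm_pos_iff.mpr hne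
    set u := ‖e‖⁻¹ • e with hu
    have huK : u ∈ K := K.smul_mem _ heK
    have hun : ‖u‖ = 1 := by
      rw [hu, norm_smul, norm_inv, norm_norm, inv_mul_cancel₀ hen.ne']
    have huorth : ∀ x ∈ s, (inner ℂ x u : ℂ).re = 0 := by
      intro x hx
      have h1 : (inner ℂ x u : ℂ) = ((‖e‖⁻¹ : ℝ) : ℂ) * (inner ℂ x e : ℂ) := by
        rw [hu, show (‖e‖⁻¹ • e : E) = ((‖e‖⁻¹ : ℝ) : ℂ) • e from (Complex.coe_smul _ _).symm,
          inner_smul_right]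
      rw [h1]
      simp [horth x hx]
    have hTu : ‖T u‖ < δ := by
      by_contra hge
      push_neg at hge
      obtain ⟨x, hxs, hxne⟩ := hs u ⟨huK, hun, hge⟩
      exact hxne (huorth x hxs)
    have hTe : T e = ‖e‖ • T u := by
      rw [hu, map_smul, smul_smul, mul_inv_cancel₀ hen.ne', one_smul]
    rw [hTe, norm_smul, Real.norm_eq_abs, abs_of_pos hen, mul_comm]
    exact mul_le_mul_of_nonneg_right hTu.le hen.le
  -- Now prove `T` is a compact operator.
  have hC : (0 : ℝ) < ‖EK‖ + 1 := by positivity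
  set C : ℝ := ‖EK‖ + 1 with hCdef
  suffices htb : TotallyBounded (T '' Metric.closedBall 0 1) by
    refine ⟨closure (T '' Metric.closedBall 0 1),
      TotallyBounded.isCompact_of_isClosed htb.closure isClosed_closure, ?_⟩
    exact Filter.mem_of_superset (Metric.closedBall_mem_nhds 0 one_pos)
      (fun x hx => subset_closure (Set.mem_image_of_mem _ hx))
  rw [Metric.totallyBounded_iff]
  intro δ hδ
  obtain ⟨s, hsK, hs⟩ := A (δ / (4 * C)) (by positivity)
  set F := Submodule.span ℝ (↑s : Set E) with hF
  haveI : FiniteDimensional ℝ F := inferInstance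
  set M := F.map (T : E →ₗ[ℝ] E) with hM
  haveI : FiniteDimensional ℝ M := Module.Finite.map F (T : E →ₗ[ℝ] E)
  -- the candidate compact set
  set A' : Set E := ((↑) : M → E) '' Metric.closedBall 0 (‖T‖ * C) with hA'
  have hA'c : IsCompact A' := (isCompact_closedBall _ _).image continuous_subtype_val
  obtain ⟨t, htf, htcover⟩ := Metric.totallyBounded_iff.mp hA'c.totallyBounded (δ / 2)
    (by positivity)
  refine ⟨t, htf, ?_⟩
  rintro _ ⟨v, hv, rfl⟩
  have hv1 : ‖v‖ ≤ 1 := by simpa using Metric.mem_closedBall.mp hv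
  set k := EK v with hk
  have hkK : k ∈ K := hEKmem v
  have hknorm : ‖k‖ ≤ C := by
    calc ‖k‖ ≤ ‖EK‖ * ‖v‖ := EK.le_opNorm v
    _ ≤ ‖EK‖ * 1 := by
        exact mul_le_mul_of_nonneg_left hv1 (norm_nonneg _)
    _ ≤ C := by rw [mul_one]; simp [hCdef]
  set p := (orthogonalProjection F k : E) with hp
  have hpF : p ∈ F := (orthogonalProjection F k).2
  have hpK : p ∈ K := (Submodule.span_le.mpr hsK) hpF
  have hsub : k - p ∈ Fᗮ := Submodule.sub_starProjection_mem_orthogonal k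
  have horth : ∀ x ∈ s, (inner ℂ x (k - p) : ℂ).re = 0 := by
    intro x hx
    have hxF : x ∈ F := Submodule.subset_span hx
    exact Submodule.inner_right_of_mem_orthogonal hxF hsub
  have hinner0 : (inner ℝ p (k - p) : ℝ) = 0 :=
    Submodule.inner_right_of_mem_orthogonal hpF hsub
  have hpyth : ‖k‖ ^ 2 = ‖p‖ ^ 2 + ‖k - p‖ ^ 2 := by
    have : k = p + (k - p) := by abel
    calc ‖k‖ ^ 2 = ‖p + (k - p)‖ ^ 2 := by rw [← this]
    _ = ‖p‖ ^ 2 + 2 * (inner ℝ p (k - p) : ℝ) + ‖k - p‖ ^ 2 := norm_add_sq_real _ _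
    _ = ‖p‖ ^ 2 + ‖k - p‖ ^ 2 := by rw [hinner0]; ring
  have hkpnorm : ‖k - p‖ ≤ ‖k‖ := by nlinarith [norm_nonneg (k - p), norm_nonneg k, norm_nonneg p]
  have hpnorm : ‖p‖ ≤ C := by nlinarith [norm_nonneg (k - p), norm_nonneg k, norm_nonneg p]
  have hsmall : ‖T v - T p‖ ≤ δ / 4 := by
    have h1 : T v - T p = T (k - p) := by rw [hTE v, map_sub]
    rw [h1]
    calc ‖T (k - p)‖ ≤ δ / (4 * C) * ‖k - p‖ := hs (k - p) (K.sub_mem hkK hpK) horth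
    _ ≤ δ / (4 * C) * C := by
        exact mul_le_mul_of_nonneg_left (hkpnorm.trans hknorm) (by positivity)
    _ = δ / 4 := by field_simp
  have hTpM : T p ∈ M := ⟨p, hpF, rfl⟩
  have hTpA : T p ∈ A' := by
    refine ⟨⟨T p, hTpM⟩, ?_, rfl⟩
    rw [Metric.mem_closedBall, dist_zero_right]
    calc ‖(⟨T p, hTpM⟩ : M)‖ = ‖T p‖ := rfl
    _ ≤ ‖T‖ * ‖p‖ := T.le_opNorm p
    _ ≤ ‖T‖ * C := mul_le_mul_of_nonneg_left hpnorm (norm_nonneg _)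
  have := htcover hTpA
  rw [Set.mem_iUnion₂] at this
  obtain ⟨c, hct, hc⟩ := this
  rw [Set.mem_iUnion₂]
  refine ⟨c, hct, ?_⟩
  rw [Metric.mem_ball]
  calc dist (T v) c ≤ dist (T v) (T p) + dist (T p) c := dist_triangle _ _ _
  _ < δ / 4 + δ / 2 := by
      apply add_lt_add_of_le_of_lt
      · rw [dist_eq_norm]; exact hsmall
      · exact Metric.mem_ball.mp hc
  _ < δ := by linarith


set_option linter.unusedSectionVars false in
theorem stmt10_bessel_aux (e : ℕ → E) (hn : ∀ n, ‖e n‖ = 1)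
    (ho : ∀ m n : ℕ, m ≠ n → (inner ℂ (e m) (e n) : ℂ).re = 0) (x : E) :
    Filter.Tendsto (fun n => (inner ℂ x (e n) : ℂ).re) Filter.atTop (nhds 0) := by
  letI : InnerProductSpace ℝ E := InnerProductSpace.rclikeToReal ℂ E
  have hON : Orthonormal ℝ e := ⟨hn, fun m n hmn => ho m n hmn⟩
  have hsum := hON.inner_products_summable (x := x)
  have h0 := hsum.tendsto_atTop_zero
  have h1 : Filter.Tendsto (fun n => |(inner ℝ (e n) x : ℝ)|) Filter.atTop (nhds 0) := by
    have := h0.sqrt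
    rw [Real.sqrt_zero] at this
    refine this.congr fun n => ?_
    rw [Real.norm_eq_abs, Real.sqrt_sq (abs_nonneg _)]
  have h2 : Filter.Tendsto (fun n => (inner ℝ (e n) x : ℝ)) Filter.atTop (nhds 0) := by
    have hb : ∀ n, -(|(inner ℝ (e n) x : ℝ)|) ≤ (inner ℝ (e n) x : ℝ) := fun n => neg_abs_le _
    have hb' : ∀ n, (inner ℝ (e n) x : ℝ) ≤ |(inner ℝ (e n) x : ℝ)| := fun n => le_abs_self _
    have hneg : Filter.Tendsto (fun n => -(|(inner ℝ (e n) x : ℝ)|)) Filter.atTop (nhds 0) := by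
      simpa using h1.neg
    exact tendsto_of_tendsto_of_tendsto_of_le_of_le hneg h1 hb hb'
  refine h2.congr fun n => ?_
  have : (inner ℝ (e n) x : ℝ) = (inner ℂ (e n) x : ℂ).re := rfl
  rw [this, ← Complex.conj_re, inner_conj_symm]


/-- If `Δ_H^{1/4} E_K` is not compact, there are weak-null sequences of unit vectors
`k_n ∈ K`, `h'_n ∈ H'` with `⟨h'_n, k_n⟩ ↛ 0`. Here `J` is the modular conjugation of `H`
and `T = Δ_H^{1/4} E_K`, characterized by `T ∘ E_K = T` and `⟨k, J k⟩ = ‖T k‖²` on `K`. -/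
theorem stmt10 {E : Type*} [NormedAddCommGroup E] [InnerProductSpace ℂ E] [CompleteSpace E]
    (H K : Submodule ℝ E) (hH : IsStandardSubspace H) (hK : IsStandardSubspace K)
    (hKH : K ≤ H)
    (J : E → E)
    (hJadd : ∀ x y : E, J (x + y) = J x + J y)
    (hJsmul : ∀ (c : ℂ) (x : E), J (c • x) = (starRingEnd ℂ) c • J x)
    (hJinv : ∀ x : E, J (J x) = x)
    (hJinner : ∀ x y : E, (inner ℂ (J x) (J y) : ℂ) = inner ℂ y x)
    (hJH : J '' (H : Set E) = (sympl H : Set E))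
    (EK : E →L[ℝ] E) (hEKmem : ∀ v : E, EK v ∈ K) (hEKfix : ∀ k ∈ K, EK k = k)
    (hEKsa : ∀ v w : E, (inner ℂ (EK v) w : ℂ).re = (inner ℂ v (EK w) : ℂ).re)
    (T : E →L[ℝ] E)
    (hTE : ∀ v : E, T v = T (EK v))
    (hT : ∀ k ∈ K, (inner ℂ k (J k) : ℂ) = ((‖T k‖ ^ 2 : ℝ) : ℂ))
    (hnc : ¬ IsCompactOperator (⇑T)) :
    ∃ k : ℕ → E, ∃ h' : ℕ → E,
      (∀ n, k n ∈ K ∧ ‖k n‖ = 1) ∧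
      (∀ n, h' n ∈ sympl H ∧ ‖h' n‖ = 1) ∧
      (∀ x : E, Filter.Tendsto (fun n => (inner ℂ x (k n) : ℂ)) Filter.atTop (nhds 0)) ∧
      (∀ x : E, Filter.Tendsto (fun n => (inner ℂ x (h' n) : ℂ)) Filter.atTop (nhds 0)) ∧
      ¬ Filter.Tendsto (fun n => (inner ℂ (h' n) (k n) : ℂ)) Filter.atTop (nhds 0) := by
  obtain ⟨ε, hε, hstep⟩ := stmt10_key_aux K EK hEKmem T hTE hnc
  haveI : Std.Symm (fun x y : E => (inner ℂ x y : ℂ).re = 0) := ⟨by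
    intro x y h
    show (inner ℂ y x : ℂ).re = 0
    have h2 := congrArg Complex.re (inner_conj_symm (𝕜 := ℂ) x y)
    rw [Complex.conj_re] at h2
    rw [h2]
    exact h⟩
  obtain ⟨e, hP, hpair⟩ := exists_seq_of_forall_finset_exists'
    (fun y : E => y ∈ K ∧ ‖y‖ = 1 ∧ ε ≤ ‖T y‖) (fun x y => (inner ℂ x y : ℂ).re = 0)
    (fun s hs => hstep s (fun x hx => (hs x hx).1))
  have hweakC : ∀ x : E, Filter.Tendsto (fun n => (inner ℂ x (e n) : ℂ)) Filter.atTop (nhds 0) := by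
    intro x
    have h1 := stmt10_bessel_aux e (fun n => (hP n).2.1) (fun m n h => hpair h) x
    have h2 := stmt10_bessel_aux e (fun n => (hP n).2.1) (fun m n h => hpair h)
      ((Complex.I : ℂ) • x)
    have him : ∀ n, (inner ℂ x (e n) : ℂ).im = (inner ℂ ((Complex.I : ℂ) • x) (e n) : ℂ).re := by
      intro n
      rw [inner_smul_left]
      simp [Complex.mul_re]
    have h2' : Filter.Tendsto (fun n => (inner ℂ x (e n) : ℂ).im) Filter.atTop (nhds 0) :=
      h2.congr fun n => (him n).symm
    have hre : Filter.Tendsto (fun n => ((inner ℂ x (e n) : ℂ).re : ℂ)) Filter.atTop (nhds 0) := by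
      simpa [Function.comp_def] using (Complex.continuous_ofReal.tendsto 0).comp h1
    have him' : Filter.Tendsto (fun n => ((inner ℂ x (e n) : ℂ).im : ℂ)) Filter.atTop (nhds 0) := by
      simpa [Function.comp_def] using (Complex.continuous_ofReal.tendsto 0).comp h2'
    have hsum : Filter.Tendsto
        (fun n => ((inner ℂ x (e n) : ℂ).re : ℂ) + ((inner ℂ x (e n) : ℂ).im : ℂ) * Complex.I)
        Filter.atTop (nhds (0 + 0 * Complex.I)) := hre.add (him'.mul_const _)
    simp only [zero_mul, add_zero] at hsum
    exact hsum.congr fun n => Complex.re_add_im _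
  have hJx : ∀ x y : E, (inner ℂ x (J y) : ℂ) = (starRingEnd ℂ) (inner ℂ (J x) y : ℂ) := by
    intro x y
    have h := hJinner (J x) y
    rw [hJinv] at h
    rw [h]
    exact (inner_conj_symm _ _).symm
  have hweakJ : ∀ x : E,
      Filter.Tendsto (fun n => (inner ℂ x (J (e n)) : ℂ)) Filter.atTop (nhds 0) := by
    intro x
    have h := (continuous_star.tendsto (0 : ℂ)).comp (hweakC (J x))
    simp only [star_zero] at h
    exact h.congr fun n => (hJx x (e n)).symm
  have hJnorm : ∀ x : E, ‖J x‖ = ‖x‖ := by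
    intro x
    have h := hJinner x x
    have h3 : (‖J x‖ : ℝ) ^ 2 = ‖x‖ ^ 2 := by
      rw [← @inner_self_eq_norm_sq ℂ, ← @inner_self_eq_norm_sq ℂ, h]
    nlinarith [norm_nonneg (J x), norm_nonneg x]
  have hmemS : ∀ n, J (e n) ∈ sympl H := by
    intro n
    have h1 : e n ∈ (H : Set E) := hKH (hP n).1
    have h2 : J (e n) ∈ (sympl H : Set E) := by
      rw [← hJH]; exact ⟨e n, h1, rfl⟩
    exact h2
  have hval : ∀ n, (inner ℂ (J (e n)) (e n) : ℂ) = ((‖T (e n)‖ ^ 2 : ℝ) : ℂ) := by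
    intro n
    rw [← inner_conj_symm, hT (e n) (hP n).1, Complex.conj_ofReal]
  refine ⟨e, fun n => J (e n), fun n => ⟨(hP n).1, (hP n).2.1⟩,
    fun n => ⟨hmemS n, by rw [hJnorm]; exact (hP n).2.1⟩, hweakC, hweakJ, ?_⟩
  intro hcontra
  have hnorm0 : Filter.Tendsto (fun n => ‖(inner ℂ (J (e n)) (e n) : ℂ)‖) Filter.atTop (nhds 0) := by
    simpa using hcontra.norm
  have hev : ∀ᶠ n in Filter.atTop, ‖(inner ℂ (J (e n)) (e n) : ℂ)‖ < ε ^ 2 :=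
    hnorm0.eventually_lt_const (by positivity)
  obtain ⟨n, hn⟩ := hev.exists
  rw [hval n] at hn
  have hge : ε ^ 2 ≤ ‖((‖T (e n)‖ ^ 2 : ℝ) : ℂ)‖ := by
    have habs : |‖T (e n)‖ ^ 2| = ‖T (e n)‖ ^ 2 := abs_of_nonneg (by positivity)
    rw [Complex.norm_real, Real.norm_eq_abs, habs]
    exact pow_le_pow_left₀ hε.le (hP n).2.2 2
  linarith
end

section
/- Let H be a standard subspace with modular operator Δ_H, and set ℋ_{H,+} = Dom(Δ_H^{1/2}) with inner product ⟨φ,ψ⟩_+ = ⟨(1+Δ_H)^{1/2}φ, (1+Δ_H)^{1/2}ψ⟩. For a real subspace K ⊆ H, the orthogonal complement of K in ℋ_{H,+} equals ℂ[K^{⊥_ℝ} ∩ H] = (K^{⊥_ℝ} ∩ H) + i(K^{⊥_ℝ} ∩ H). -/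
open Complex Submodule Filter Topology

variable {E : Type*} [NormedAddCommGroup E] [InnerProductSpace ℂ E]

lemma key_inner (h₁ h₂ k : E) :
    (inner ℂ (h₁ + Complex.I • h₂) k : ℂ) + (inner ℂ k (h₁ - Complex.I • h₂) : ℂ)
    = ((2 * (inner ℂ h₁ k : ℂ).re : ℝ) : ℂ) - ((2 * (inner ℂ h₂ k : ℂ).re : ℝ) : ℂ) * Complex.I := by
  have e1 : (inner ℂ k h₁ : ℂ) = starRingEnd ℂ (inner ℂ h₁ k) := (inner_conj_symm k h₁).symm
  have e3 : (inner ℂ k h₂ : ℂ) = starRingEnd ℂ (inner ℂ h₂ k) := (inner_conj_symm k h₂).symm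
  rw [inner_add_left, inner_smul_left, inner_sub_right, inner_smul_right, e1, e3]
  simp only [Complex.ext_iff, Complex.add_re, Complex.add_im, Complex.sub_re, Complex.sub_im,
    Complex.mul_re, Complex.mul_im, Complex.conj_re, Complex.conj_im, Complex.I_re, Complex.I_im,
    Complex.ofReal_re, Complex.ofReal_im]
  constructor <;> ring

lemma key_zero_iff (a b : ℝ) :
    ((2 * a : ℝ) : ℂ) - ((2 * b : ℝ) : ℂ) * Complex.I = 0 ↔ a = 0 ∧ b = 0 := by
  simp only [Complex.ext_iff, Complex.sub_re, Complex.sub_im, Complex.mul_re, Complex.mul_im,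
    Complex.I_re, Complex.I_im, Complex.ofReal_re, Complex.ofReal_im, Complex.zero_re,
    Complex.zero_im]
  constructor
  · rintro ⟨h1, h2⟩; constructor <;> linarith
  · rintro ⟨h1, h2⟩; constructor <;> (subst h1; subst h2; ring)

/-- In the graph inner product `⟨φ,ψ⟩₊ = ⟨φ,ψ⟩ + ⟨Δ^{1/2}φ, Δ^{1/2}ψ⟩
= ⟨φ,ψ⟩ + ⟨S ψ, S φ⟩` on `ℋ₊ = H + iH`, the orthogonal complement of a real
subspace `K ⊆ H` equals `ℂ[K^{⊥ᵣ} ∩ H]`. -/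
theorem stmt11 {E : Type*} [NormedAddCommGroup E] [InnerProductSpace ℂ E] [CompleteSpace E]
    (H : Submodule ℝ E) (hH : IsStandardSubspace H)
    (S : E → E)
    (hS : ∀ h₁ ∈ H, ∀ h₂ ∈ H, S (h₁ + Complex.I • h₂) = h₁ - Complex.I • h₂)
    (K : Submodule ℝ E) (hKH : K ≤ H) :
    {v : E | v ∈ (cspan H : Submodule ℝ E) ∧
        ∀ k ∈ K, (inner ℂ v k : ℂ) + (inner ℂ (S k) (S v) : ℂ) = 0}
      = ((cspan (realPerp K ⊓ H) : Submodule ℝ E) : Set E) := by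
  ext v
  simp only [Set.mem_setOf_eq, SetLike.mem_coe]
  have hmulI : ∀ x : E, mulI E x = Complex.I • x := fun x => rfl
  have hSk : ∀ k ∈ K, S k = k := by
    intro k hk
    have := hS k (hKH hk) 0 H.zero_mem
    simpa using this
  constructor
  · rintro ⟨hv, hcond⟩
    rw [cspan, Submodule.mem_sup] at hv
    obtain ⟨h₁, hh₁, w, hw, rfl⟩ := hv
    rw [Submodule.mem_map] at hw
    obtain ⟨h₂, hh₂, rfl⟩ := hw
    rw [hmulI] at hcond ⊢
    have hperp : ∀ k ∈ K, (inner ℂ h₁ k : ℂ).re = 0 ∧ (inner ℂ h₂ k : ℂ).re = 0 := by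
      intro k hk
      have hc := hcond k hk
      rw [hSk k hk, hS h₁ hh₁ h₂ hh₂, key_inner] at hc
      exact (key_zero_iff _ _).mp hc
    rw [cspan, Submodule.mem_sup]
    refine ⟨h₁, ⟨fun k hk => (hperp k hk).1, hh₁⟩, Complex.I • h₂,
      Submodule.mem_map.mpr ⟨h₂, ⟨fun k hk => (hperp k hk).2, hh₂⟩, rfl⟩, rfl⟩
  · intro hv
    rw [cspan, Submodule.mem_sup] at hv
    obtain ⟨h₁, hh₁, w, hw, rfl⟩ := hv
    rw [Submodule.mem_map] at hw
    obtain ⟨h₂, hh₂, rfl⟩ := hw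
    obtain ⟨h₁p, h₁H⟩ := hh₁
    obtain ⟨h₂p, h₂H⟩ := hh₂
    rw [hmulI]
    constructor
    · rw [cspan, Submodule.mem_sup]
      exact ⟨h₁, h₁H, Complex.I • h₂, Submodule.mem_map.mpr ⟨h₂, h₂H, rfl⟩, rfl⟩
    · intro k hk
      rw [hSk k hk, hS h₁ h₁H h₂ h₂H, key_inner, h₁p k hk, h₂p k hk]
      simp
end

section
/- Let K be a standard subspace of ℋ, F ⊆ ℋ a closed real subspace, and H := closure(K + F). Then (iH) ∩ K′ = closure(E_{K′}(iF)), where E_{K′} is the real-orthogonal projection onto K′. Consequently K′ = H′ ⊕_ℝ closure(E_{K′}(iF)). -/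
open Complex Submodule Filter Topology

variable {E : Type*} [NormedAddCommGroup E] [InnerProductSpace ℂ E]

section Aux

attribute [local instance] InnerProductSpace.complexToReal

variable {E : Type*} [NormedAddCommGroup E] [InnerProductSpace ℂ E]

lemma real_inner_eq_re (x y : E) : (inner ℝ x y : ℝ) = (inner ℂ x y : ℂ).re := rfl

lemma mulI_apply' (x : E) : mulI E x = (Complex.I : ℂ) • x := rfl

/-- Multiplication by `i` as a continuous linear equivalence. -/
noncomputable def mulIL (E : Type*) [NormedAddCommGroup E] [InnerProductSpace ℂ E] :
    E ≃L[ℝ] E where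
  toLinearEquiv := LinearEquiv.ofLinear (mulI E) (-(mulI E))
    (by ext x; simp [mulI, smul_smul]) (by ext x; simp [mulI, smul_smul])
  continuous_toFun := continuous_const_smul _
  continuous_invFun := (continuous_const_smul (Complex.I : ℂ)).neg

lemma mulIL_coe : ⇑(mulIL E) = ⇑(mulI E) := rfl

lemma re_inner_I_smul (v k : E) :
    (inner ℂ v ((Complex.I : ℂ) • k) : ℂ).re = -(inner ℂ v k : ℂ).im := by
  rw [inner_smul_right]; simp [Complex.mul_re]

lemma mem_sympl_iff {K : Submodule ℝ E} {v : E} :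
    v ∈ sympl K ↔ ∀ k ∈ K, (inner ℂ v k : ℂ).im = 0 := Iff.rfl

lemma sympl_eq_orth (K : Submodule ℝ E) : sympl K = (K.map (mulI E))ᗮ := by
  ext v
  rw [Submodule.mem_orthogonal', mem_sympl_iff]
  constructor
  · rintro hv u ⟨k, hk, rfl⟩
    rw [real_inner_eq_re, mulI_apply', re_inner_I_smul, hv k hk, neg_zero]
  · intro hv k hk
    have := hv (mulI E k) ⟨k, hk, rfl⟩
    rw [real_inner_eq_re, mulI_apply', re_inner_I_smul, neg_eq_zero] at this
    exact this

lemma isClosed_sympl (K : Submodule ℝ E) : IsClosed ((sympl K : Submodule ℝ E) : Set E) := by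
  rw [sympl_eq_orth]; exact Submodule.isClosed_orthogonal _

lemma sympl_antitone {K H : Submodule ℝ E} (h : K ≤ H) : sympl H ≤ sympl K :=
  fun v hv k hk => hv k (h hk)

end Aux


/-- For `H = closure (K + F)`: `(iH) ∩ K' = closure (E_{K'}(iF))`, and consequently
`K' = H' ⊕ᵣ closure (E_{K'}(iF))` as a real-orthogonal direct sum. -/
theorem stmt12 {E : Type*} [NormedAddCommGroup E] [InnerProductSpace ℂ E] [CompleteSpace E]
    (K : Submodule ℝ E) (hK : IsStandardSubspace K)
    (F : Submodule ℝ E) (hF : IsClosed (F : Set E))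
    (EK' : E →L[ℝ] E)
    (hEK'mem : ∀ v : E, EK' v ∈ sympl K) (hEK'fix : ∀ v ∈ sympl K, EK' v = v)
    (hEK'sa : ∀ v w : E, (inner ℂ (EK' v) w : ℂ).re = (inner ℂ v (EK' w) : ℂ).re)
    (H : Submodule ℝ E) (hHdef : H = (K ⊔ F).topologicalClosure) :
    ((H.map (mulI E) : Submodule ℝ E) : Set E) ∩ (sympl K : Set E)
        = closure (EK' '' ((mulI E) '' (F : Set E))) ∧
    (∀ a ∈ sympl H, ∀ b ∈ closure (EK' '' ((mulI E) '' (F : Set E))),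
        (inner ℂ a b : ℂ).re = 0) ∧
    (∀ v ∈ sympl K, ∃ a ∈ sympl H,
        ∃ b ∈ closure (EK' '' ((mulI E) '' (F : Set E))), v = a + b) := by
  letI : InnerProductSpace ℝ E := InnerProductSpace.complexToReal
  set S : Set E := EK' '' ((mulI E) '' (F : Set E)) with hS
  have hKH : K ≤ H := hHdef ▸ le_sup_left.trans (K ⊔ F).le_topologicalClosure
  have hFH : F ≤ H := hHdef ▸ le_sup_right.trans (K ⊔ F).le_topologicalClosure
  have hHclosed : IsClosed (H : Set E) := hHdef ▸ (K ⊔ F).isClosed_topologicalClosure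
  have hIK0 : ∀ k ∈ K, EK' ((Complex.I : ℂ) • k) = 0 := by
    intro k hk
    have h1 : ∀ w ∈ sympl K, (inner ℂ ((Complex.I : ℂ) • k) w : ℂ).re = 0 := by
      intro w hw
      have h2 : (inner ℂ k w : ℂ).im = 0 := by
        rw [← inner_conj_symm, Complex.conj_im, hw k hk, neg_zero]
      rw [inner_smul_left]
      simp [Complex.mul_re, h2]
    have h3 : (inner ℂ (EK' ((Complex.I : ℂ) • k)) (EK' ((Complex.I : ℂ) • k)) : ℂ).re = 0 := by
      rw [hEK'sa]
      exact h1 _ (hEK'mem _)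
    have h4 : (inner ℝ (EK' ((Complex.I : ℂ) • k)) (EK' ((Complex.I : ℂ) • k)) : ℝ) = 0 := h3
    exact inner_self_eq_zero.mp h4
  have hSsym : S ⊆ (sympl K : Set E) := by rintro _ ⟨x, -, rfl⟩; exact hEK'mem x
  have hMclosure : closure S ⊆ (sympl K : Set E) :=
    closure_minimal hSsym (isClosed_sympl K)
  have part1 : ((H.map (mulI E) : Submodule ℝ E) : Set E) ∩ (sympl K : Set E) = closure S := by
    apply Set.Subset.antisymm
    · rintro v ⟨hv1, hv2⟩
      obtain ⟨h, hh, rfl⟩ := Submodule.mem_map.mp hv1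
      have hh' : h ∈ closure ((K ⊔ F : Submodule ℝ E) : Set E) := by
        rw [hHdef] at hh
        rw [← Submodule.topologicalClosure_coe]
        exact hh
      have hgc : Continuous (fun x : E => EK' ((Complex.I : ℂ) • x)) :=
        EK'.continuous.comp (continuous_const_smul _)
      have himg : (fun x : E => EK' ((Complex.I : ℂ) • x)) '' ((K ⊔ F : Submodule ℝ E) : Set E)
          ⊆ S := by
        rintro _ ⟨x, hx, rfl⟩
        obtain ⟨k, hk, f, hf, rfl⟩ := Submodule.mem_sup.mp hx
        have he : EK' ((Complex.I : ℂ) • (k + f)) = EK' ((Complex.I : ℂ) • f) := by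
          rw [smul_add, map_add, hIK0 k hk, zero_add]
        show EK' ((Complex.I : ℂ) • (k + f)) ∈ S
        rw [he]
        exact ⟨(Complex.I : ℂ) • f, ⟨f, hf, rfl⟩, rfl⟩
      have hv' : EK' ((Complex.I : ℂ) • h) ∈ closure S :=
        closure_mono himg (image_closure_subset_closure_image hgc ⟨h, hh', rfl⟩)
      have hfix : EK' (mulI E h) = mulI E h := hEK'fix _ hv2
      have hthis : EK' (mulI E h) ∈ closure S := hv'
      rwa [hfix] at hthis
    · apply Set.subset_inter ?_ hMclosure
      have hclosed : IsClosed ((H.map (mulI E) : Submodule ℝ E) : Set E) := by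
        have hset : ((H.map (mulI E) : Submodule ℝ E) : Set E) = (mulIL E) '' (H : Set E) := rfl
        rw [hset]
        exact (mulIL E).toHomeomorph.isClosedMap _ hHclosed
      apply closure_minimal ?_ hclosed
      rintro _ ⟨_, ⟨f, hf, rfl⟩, rfl⟩
      have hw : mulI E f - EK' (mulI E f) ∈ (sympl K : Submodule ℝ E)ᗮ := by
        rw [Submodule.mem_orthogonal']
        intro u hu
        rw [real_inner_eq_re]
        have hre : (inner ℂ (mulI E f - EK' (mulI E f)) u : ℂ).re
            = (inner ℂ (mulI E f) u : ℂ).re - (inner ℂ (EK' (mulI E f)) u : ℂ).re := by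
          rw [inner_sub_left, Complex.sub_re]
        rw [hre, hEK'sa, hEK'fix u hu, sub_self]
      have hiKclosed : IsClosed ((K.map (mulI E) : Submodule ℝ E) : Set E) := by
        have hset : ((K.map (mulI E) : Submodule ℝ E) : Set E) = (mulIL E) '' (K : Set E) := rfl
        rw [hset]
        exact (mulIL E).toHomeomorph.isClosedMap _ hK.isClosed
      haveI := hiKclosed.completeSpace_coe
      have horth : (sympl K : Submodule ℝ E)ᗮ = K.map (mulI E) := by
        rw [sympl_eq_orth, Submodule.orthogonal_orthogonal]
      rw [horth] at hw
      obtain ⟨k, hk, hkw⟩ := Submodule.mem_map.mp hw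
      refine Submodule.mem_map.mpr ⟨f - k, H.sub_mem (hFH hf) (hKH hk), ?_⟩
      rw [map_sub, hkw, sub_sub_cancel]
  have part2 : ∀ a ∈ sympl H, ∀ b ∈ closure S, (inner ℂ a b : ℂ).re = 0 := by
    intro a ha b hb
    have haK : a ∈ sympl K := sympl_antitone hKH ha
    have hclosed : IsClosed {x : E | (inner ℂ a x : ℂ).re = 0} :=
      isClosed_eq (Complex.continuous_re.comp (continuous_const.inner continuous_id))
        continuous_const
    have hsub : S ⊆ {x : E | (inner ℂ a x : ℂ).re = 0} := by
      rintro _ ⟨_, ⟨f, hf, rfl⟩, rfl⟩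
      show (inner ℂ a (EK' (mulI E f)) : ℂ).re = 0
      rw [← hEK'sa, hEK'fix a haK, mulI_apply', re_inner_I_smul, ha f (hFH hf), neg_zero]
    exact closure_minimal hsub hclosed hb
  refine ⟨part1, part2, ?_⟩
  intro v hv
  set M : Submodule ℝ E := ((F.map (mulI E)).map (EK' : E →ₗ[ℝ] E)).topologicalClosure with hM
  have hMcoe : (M : Set E) = closure S := by
    rw [hM, Submodule.topologicalClosure_coe, Submodule.map_coe, Submodule.map_coe]
    rfl
  haveI : CompleteSpace M := (Submodule.isClosed_topologicalClosure _).completeSpace_coe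
  obtain ⟨b, hbM, a, haM, hvab⟩ := M.exists_add_mem_mem_orthogonal v
  have hbS : b ∈ closure S := hMcoe ▸ hbM
  have hbK : b ∈ sympl K := hMclosure hbS
  have haK : a ∈ sympl K := by
    have hsub : v - b ∈ sympl K := (sympl K).sub_mem hv hbK
    have hva : v - b = a := by rw [hvab]; abel
    rwa [hva] at hsub
  have haH : a ∈ sympl H := by
    rw [mem_sympl_iff]
    intro h hh
    have hh' : h ∈ closure ((K ⊔ F : Submodule ℝ E) : Set E) := by
      rw [hHdef] at hh
      rw [← Submodule.topologicalClosure_coe]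
      exact hh
    have hcl : IsClosed {x : E | (inner ℂ a x : ℂ).im = 0} :=
      isClosed_eq (Complex.continuous_im.comp (continuous_const.inner continuous_id))
        continuous_const
    have hsub : ((K ⊔ F : Submodule ℝ E) : Set E) ⊆ {x : E | (inner ℂ a x : ℂ).im = 0} := by
      intro x hx
      obtain ⟨k, hk, f, hf, rfl⟩ := Submodule.mem_sup.mp hx
      show (inner ℂ a (k + f) : ℂ).im = 0
      rw [inner_add_right, Complex.add_im, haK k hk, zero_add]
      have h1 : (inner ℂ a ((Complex.I : ℂ) • f) : ℂ).re = 0 := by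
        rw [← hEK'fix a haK, hEK'sa]
        have hmem : EK' ((Complex.I : ℂ) • f) ∈ M :=
          Submodule.le_topologicalClosure _
            (Submodule.mem_map.mpr ⟨mulI E f, Submodule.mem_map.mpr ⟨f, hf, rfl⟩, rfl⟩)
        have h0 := Submodule.inner_right_of_mem_orthogonal hmem haM
        rw [real_inner_comm] at h0
        exact h0
      rw [re_inner_I_smul] at h1
      exact neg_eq_zero.mp h1
    exact closure_minimal hsub hcl hh'
  exact ⟨a, haH, b, hbS, by rw [hvab, add_comm]⟩
end

section
/- Let H be a standard subspace and U a unitary with UH ⊆ H. Define B_U := U* Δ_H^{1/2} on Dom(Δ_H^{1/2}). Then B_U is symmetric (B_U ⊆ B_U*) if and only if U = J_H U* J_H. -/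
open Complex Submodule Filter Topology

variable {E : Type*} [NormedAddCommGroup E] [InnerProductSpace ℂ E]

/-- For a unitary `U` with `UH ⊆ H`, the operator `B_U = U* Δ_H^{1/2}` (here
`Δ_H^{1/2} = J ∘ S`, pinned down as the positive selfadjoint factor in the polar
decomposition of `S`) is symmetric iff `U = J U* J`. -/
theorem stmt16 {E : Type*} [NormedAddCommGroup E] [InnerProductSpace ℂ E] [CompleteSpace E]
    (H : Submodule ℝ E) (hH : IsStandardSubspace H)
    (S : E → E)
    (hS : ∀ h₁ ∈ H, ∀ h₂ ∈ H, S (h₁ + Complex.I • h₂) = h₁ - Complex.I • h₂)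
    (J : E → E)
    (hJadd : ∀ x y : E, J (x + y) = J x + J y)
    (hJsmul : ∀ (c : ℂ) (x : E), J (c • x) = (starRingEnd ℂ) c • J x)
    (hJinv : ∀ x : E, J (J x) = x)
    (hJinner : ∀ x y : E, (inner ℂ (J x) (J y) : ℂ) = inner ℂ y x)
    (hpos : ∀ v ∈ (cspan H : Submodule ℝ E),
        0 ≤ (inner ℂ v (J (S v)) : ℂ).re ∧ (inner ℂ v (J (S v)) : ℂ).im = 0)
    (hsymm : ∀ v ∈ (cspan H : Submodule ℝ E), ∀ w ∈ (cspan H : Submodule ℝ E),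
        (inner ℂ (J (S v)) w : ℂ) = inner ℂ v (J (S w)))
    (hran : ∀ w : E, ∃ v ∈ (cspan H : Submodule ℝ E), v + J (S v) = w)
    (U : E ≃ₗᵢ[ℂ] E) (hUH : ∀ h ∈ H, U h ∈ H) :
    (∀ v ∈ (cspan H : Submodule ℝ E), ∀ w ∈ (cspan H : Submodule ℝ E),
        (inner ℂ (U.symm (J (S v))) w : ℂ) = inner ℂ v (U.symm (J (S w))))
      ↔ (∀ x : E, U x = J (U.symm (J x))) := by

  classical
  -- membership characterization of `cspan H`
  have memD : ∀ v ∈ (cspan H : Submodule ℝ E), ∃ h₁ ∈ H, ∃ h₂ ∈ H,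
      v = h₁ + Complex.I • h₂ := by
    intro v hv
    rw [cspan, Submodule.mem_sup] at hv
    obtain ⟨y, hy, z, hz, rfl⟩ := hv
    obtain ⟨h, hh, rfl⟩ := hz
    exact ⟨y, hy, h, hh, rfl⟩
  have memD' : ∀ h₁ ∈ H, ∀ h₂ ∈ H, h₁ + Complex.I • h₂ ∈ (cspan H : Submodule ℝ E) := by
    intro h₁ hh₁ h₂ hh₂
    exact Submodule.mem_sup.mpr ⟨h₁, hh₁, Complex.I • h₂, ⟨h₂, hh₂, rfl⟩, rfl⟩
  -- basic facts about `S` and `U` on the domain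
  have facts : ∀ v ∈ (cspan H : Submodule ℝ E),
      S v ∈ (cspan H : Submodule ℝ E) ∧ S (S v) = v ∧
      (U v : E) ∈ (cspan H : Submodule ℝ E) ∧ S (U v) = U (S v) := by
    intro v hv
    obtain ⟨h₁, hh₁, h₂, hh₂, rfl⟩ := memD v hv
    have hSv : S (h₁ + Complex.I • h₂) = h₁ - Complex.I • h₂ := hS h₁ hh₁ h₂ hh₂
    have hrw : h₁ - Complex.I • h₂ = h₁ + Complex.I • (-h₂) := by
      rw [smul_neg, sub_eq_add_neg]
    have hUv : (U (h₁ + Complex.I • h₂) : E) = U h₁ + Complex.I • U h₂ := by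
      rw [map_add, map_smul]
    refine ⟨?_, ?_, ?_, ?_⟩
    · rw [hSv, hrw]; exact memD' h₁ hh₁ (-h₂) (neg_mem hh₂)
    · rw [hSv, hrw, hS h₁ hh₁ (-h₂) (neg_mem hh₂), smul_neg, sub_neg_eq_add]
    · rw [hUv]; exact memD' _ (hUH h₁ hh₁) _ (hUH h₂ hh₂)
    · rw [hUv, hS _ (hUH h₁ hh₁) _ (hUH h₂ hh₂), hSv, map_sub, map_smul]
  -- J is isometric, hence continuous
  have hJsub : ∀ x y : E, J (x - y) = J x - J y := by
    intro x y
    have h := hJadd (x - y) y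
    rw [sub_add_cancel] at h
    exact eq_sub_of_add_eq h.symm
  have hJnorm : ∀ x : E, ‖J x‖ = ‖x‖ := by
    intro x
    have h := hJinner x x
    rw [inner_self_eq_norm_sq_to_K, inner_self_eq_norm_sq_to_K] at h
    have h' : ‖J x‖ ^ 2 = ‖x‖ ^ 2 := by exact_mod_cast h
    nlinarith [norm_nonneg (J x), norm_nonneg x]
  have hJcont : Continuous J := by
    have : Isometry J := Isometry.of_dist_eq fun x y => by
      rw [dist_eq_norm, dist_eq_norm, ← hJsub, hJnorm]
    exact this.continuous
  -- unitarity rewriting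
  have hUadj : ∀ x y : E, (inner ℂ (U x) y : ℂ) = inner ℂ x (U.symm y) := by
    intro x y
    calc (inner ℂ (U x) y : ℂ) = inner ℂ (U x) (U (U.symm y)) := by rw [U.apply_symm_apply]
      _ = inner ℂ x (U.symm y) := U.inner_map_map _ _
  constructor
  · intro hsym
    have key0 : ∀ w ∈ (cspan H : Submodule ℝ E), J (U (S w)) = U.symm (J (S w)) := by
      intro w hw
      have hUw := (facts w hw).2.2.1
      have hSUw := (facts w hw).2.2.2
      have hd : ∀ v ∈ (cspan H : Submodule ℝ E),
          (inner ℂ v (J (U (S w)) - U.symm (J (S w))) : ℂ) = 0 := by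
        intro v hv
        rw [inner_sub_right]
        have e1 : (inner ℂ v (J (U (S w))) : ℂ) = inner ℂ v (U.symm (J (S w))) := by
          calc (inner ℂ v (J (U (S w))) : ℂ) = inner ℂ v (J (S (U w))) := by rw [hSUw]
            _ = inner ℂ (J (S v)) (U w) := (hsymm v hv (U w) hUw).symm
            _ = inner ℂ (U (U.symm (J (S v)))) (U w) := by rw [U.apply_symm_apply]
            _ = inner ℂ (U.symm (J (S v))) w := U.inner_map_map _ _
            _ = inner ℂ v (U.symm (J (S w))) := hsym v hv w hw
        rw [e1, sub_self]
      set y := J (U (S w)) - U.symm (J (S w)) with hy_def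
      have hcont : Continuous (fun v : E => (inner ℂ v y : ℂ)) :=
        continuous_id.inner continuous_const
      have hfun : (fun v : E => (inner ℂ v y : ℂ)) = fun _ => (0 : ℂ) :=
        hcont.ext_on hH.cyclic continuous_const (fun v hv => hd v hv)
      have hy : (inner ℂ y y : ℂ) = 0 := congrFun hfun y
      have : y = 0 := inner_self_eq_zero.mp hy
      exact sub_eq_zero.mp this
    have key : ∀ u ∈ (cspan H : Submodule ℝ E), J (U u) = U.symm (J u) := by
      intro u hu
      have h := key0 (S u) (facts u hu).1
      rw [(facts u hu).2.1] at h
      exact h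
    have hfun : (fun x : E => J (U x)) = fun x => U.symm (J x) :=
      Continuous.ext_on hH.cyclic (hJcont.comp U.continuous)
        (U.symm.continuous.comp hJcont) (fun u hu => key u hu)
    intro x
    calc (U x : E) = J (J (U x)) := (hJinv _).symm
      _ = J (U.symm (J x)) := by rw [congrFun hfun x]
  · intro hJU v hv w hw
    have hinv : ∀ z : E, U.symm (J z) = J (U z) := by
      intro z
      have h1 : (U (J (U z)) : E) = J z := by
        rw [hJU (J (U z)), hJinv, U.symm_apply_apply]
      have h2 := congrArg U.symm h1
      rw [U.symm_apply_apply] at h2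
      exact h2.symm
    have hUv := (facts v hv).2.2.1
    have hSUv := (facts v hv).2.2.2
    calc (inner ℂ (U.symm (J (S v))) w : ℂ) = inner ℂ (J (U (S v))) w := by rw [hinv]
      _ = inner ℂ (J (S (U v))) w := by rw [hSUv]
      _ = inner ℂ (U v) (J (S w)) := hsymm (U v) hUv w hw
      _ = inner ℂ v (U.symm (J (S w))) := hUadj v (J (S w))
end

section
/- Let H be a standard subspace and U a unitary with UH ⊆ H such that B_U := U*Δ_H^{1/2} is self-adjoint. Then U = U* and UH = H. -/
open Complex Submodule Filter Topology

variable {E : Type*} [NormedAddCommGroup E] [InnerProductSpace ℂ E]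

private lemma aux_seq17 {c : ℕ → ℝ} {Cb : ℝ} (h0 : ∀ k, 0 ≤ c k) (hb : ∀ k, c k ≤ Cb)
    (hlog : ∀ k, (c (k+1))^2 ≤ c k * c (k+2)) : c 1 ≤ c 0 := by
  by_contra hcon
  push_neg at hcon
  have hc0 : 0 < c 0 := by
    rcases (h0 0).lt_or_eq with h | h
    · exact h
    · exfalso
      have h2 := hlog 0
      rw [← h] at h2
      simp only [zero_mul] at h2
      have : c 1 = 0 := by nlinarith [h0 1]
      rw [this, ← h] at hcon
      exact lt_irrefl 0 hcon
  set r := c 1 / c 0 with hr_def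
  have hr : 1 < r := (one_lt_div hc0).mpr hcon
  have hr0 : 0 < r := lt_trans one_pos hr
  have step : ∀ k, 0 < c k ∧ r * c k ≤ c (k + 1) := by
    intro k
    induction k with
    | zero => exact ⟨hc0, by rw [hr_def]; field_simp; exact le_rfl⟩
    | succ n ih =>
      obtain ⟨hpos, hle⟩ := ih
      have hc1 : 0 < c (n + 1) := lt_of_lt_of_le (by positivity) hle
      refine ⟨hc1, ?_⟩
      have h2 := hlog n
      nlinarith [mul_le_mul_of_nonneg_right hle (le_of_lt hc1)]
  have geo : ∀ k, r ^ k * c 0 ≤ c k := by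
    intro k
    induction k with
    | zero => simp
    | succ n ih =>
      have := (step n).2
      calc r ^ (n + 1) * c 0 = r * (r ^ n * c 0) := by ring
        _ ≤ r * c n := by nlinarith
        _ ≤ c (n + 1) := this
  obtain ⟨n, hn⟩ := pow_unbounded_of_one_lt (Cb / c 0) hr
  have : Cb < c n := lt_of_lt_of_le (by rwa [div_lt_iff₀ hc0] at hn) (geo n)
  exact absurd (hb n) (not_le.mpr this)

set_option maxHeartbeats 2000000 in
/-- If `B_U = U* Δ_H^{1/2}` is selfadjoint (symmetric, with `Ran (B_U ± i) = ℋ`),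
then `U = U*` and `UH = H`. -/
theorem stmt17 {E : Type*} [NormedAddCommGroup E] [InnerProductSpace ℂ E] [CompleteSpace E]
    (H : Submodule ℝ E) (hH : IsStandardSubspace H)
    (S : E → E)
    (hS : ∀ h₁ ∈ H, ∀ h₂ ∈ H, S (h₁ + Complex.I • h₂) = h₁ - Complex.I • h₂)
    (J : E → E)
    (hJadd : ∀ x y : E, J (x + y) = J x + J y)
    (hJsmul : ∀ (c : ℂ) (x : E), J (c • x) = (starRingEnd ℂ) c • J x)
    (hJinv : ∀ x : E, J (J x) = x)
    (hJinner : ∀ x y : E, (inner ℂ (J x) (J y) : ℂ) = inner ℂ y x)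
    (hpos : ∀ v ∈ (cspan H : Submodule ℝ E),
        0 ≤ (inner ℂ v (J (S v)) : ℂ).re ∧ (inner ℂ v (J (S v)) : ℂ).im = 0)
    (hsymm : ∀ v ∈ (cspan H : Submodule ℝ E), ∀ w ∈ (cspan H : Submodule ℝ E),
        (inner ℂ (J (S v)) w : ℂ) = inner ℂ v (J (S w)))
    (hran : ∀ w : E, ∃ v ∈ (cspan H : Submodule ℝ E), v + J (S v) = w)
    (U : E ≃ₗᵢ[ℂ] E) (hUH : ∀ h ∈ H, U h ∈ H)
    (hBsymm : ∀ v ∈ (cspan H : Submodule ℝ E), ∀ w ∈ (cspan H : Submodule ℝ E),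
        (inner ℂ (U.symm (J (S v))) w : ℂ) = inner ℂ v (U.symm (J (S w))))
    (hBranp : ∀ w : E, ∃ v ∈ (cspan H : Submodule ℝ E),
        U.symm (J (S v)) + Complex.I • v = w)
    (hBranm : ∀ w : E, ∃ v ∈ (cspan H : Submodule ℝ E),
        U.symm (J (S v)) - Complex.I • v = w) :
    (∀ x : E, U x = U.symm x) ∧ (⇑U '' (H : Set E) = (H : Set E)) := by
  set D : Submodule ℝ E := cspan H with hD_def
  set Tf : E → E := fun v => J (S v) with hTf_def
  have hdense : Dense (D : Set E) := hH.cyclic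
  -- density lemma
  have hEq : ∀ a b : E, (∀ v ∈ D, (inner ℂ v a : ℂ) = inner ℂ v b) → a = b := by
    intro a b hab
    have hfg : (fun x : E => (inner ℂ x a : ℂ)) = fun x : E => (inner ℂ x b : ℂ) :=
      Continuous.ext_on hdense (by continuity) (by continuity) (fun v hv => hab v hv)
    have h2 : (inner ℂ (a - b) a : ℂ) = inner ℂ (a - b) b := congrFun hfg (a - b)
    have h3 : (inner ℂ (a - b) (a - b) : ℂ) = 0 := by rw [inner_sub_right, h2, sub_self]
    exact sub_eq_zero.mp (inner_self_eq_zero.mp h3)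
  -- decomposition
  have hdecomp : ∀ v ∈ D, ∃ h₁ ∈ H, ∃ h₂ ∈ H, v = h₁ + Complex.I • h₂ := by
    intro v hv
    have hv' : v ∈ H ⊔ H.map (mulI E) := hv
    rw [Submodule.mem_sup] at hv'
    obtain ⟨h₁, hh₁, z, hz, hsum⟩ := hv'
    rw [Submodule.mem_map] at hz
    obtain ⟨h₂, hh₂, rfl⟩ := hz
    exact ⟨h₁, hh₁, h₂, hh₂, hsum.symm⟩
  have hHD : ∀ h ∈ H, h ∈ D := fun h hh => Submodule.mem_sup_left hh
  have hID : ∀ h ∈ H, Complex.I • h ∈ D :=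
    fun h hh => Submodule.mem_sup_right ⟨h, hh, rfl⟩
  have hUD : ∀ v ∈ D, U v ∈ D := by
    intro v hv
    obtain ⟨h₁, hh₁, h₂, hh₂, rfl⟩ := hdecomp v hv
    rw [map_add, map_smul]
    exact add_mem (hHD _ (hUH h₁ hh₁)) (hID _ (hUH h₂ hh₂))
  -- S lemmas
  have hSmem : ∀ v ∈ D, S v ∈ D := by
    intro v hv
    obtain ⟨h₁, hh₁, h₂, hh₂, rfl⟩ := hdecomp v hv
    rw [hS h₁ hh₁ h₂ hh₂]
    have e : h₁ - Complex.I • h₂ = h₁ + Complex.I • (-h₂) := by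
      rw [smul_neg, ← sub_eq_add_neg]
    rw [e]
    exact add_mem (hHD _ hh₁) (hID _ (neg_mem hh₂))
  have hSS : ∀ v ∈ D, S (S v) = v := by
    intro v hv
    obtain ⟨h₁, hh₁, h₂, hh₂, rfl⟩ := hdecomp v hv
    rw [hS h₁ hh₁ h₂ hh₂]
    have e : h₁ - Complex.I • h₂ = h₁ + Complex.I • (-h₂) := by
      rw [smul_neg, ← sub_eq_add_neg]
    rw [e, hS h₁ hh₁ (-h₂) (neg_mem hh₂), smul_neg, sub_neg_eq_add]
  have hS0 : S 0 = 0 := by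
    have h := hS 0 (zero_mem H) 0 (zero_mem H)
    simpa using h
  have hJ0 : J 0 = 0 := by
    have h := hJadd 0 0
    rw [add_zero] at h
    exact (left_eq_add.mp h)
  -- D closed under complex scalars
  have hDI : ∀ v ∈ D, Complex.I • v ∈ D := by
    intro v hv
    obtain ⟨h₁, hh₁, h₂, hh₂, rfl⟩ := hdecomp v hv
    have e : Complex.I • (h₁ + Complex.I • h₂) = -h₂ + Complex.I • h₁ := by
      rw [smul_add, smul_smul, Complex.I_mul_I, neg_one_smul, add_comm]
    rw [e]
    exact add_mem (neg_mem (hHD _ hh₂)) (hID _ hh₁)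
  have hsplit : ∀ (μ : ℂ) (x : E), μ • x = μ.re • x + μ.im • (Complex.I • x) := by
    intro μ x
    calc μ • x = ((μ.re : ℂ) + (μ.im : ℂ) * Complex.I) • x := by rw [Complex.re_add_im]
      _ = (μ.re : ℂ) • x + ((μ.im : ℂ) * Complex.I) • x := add_smul _ _ _
      _ = μ.re • x + μ.im • (Complex.I • x) := by
          rw [mul_smul, Complex.coe_smul, Complex.coe_smul]
  have hDC : ∀ (μ : ℂ), ∀ v ∈ D, μ • v ∈ D := by
    intro μ v hv
    rw [hsplit μ v]
    exact add_mem (Submodule.smul_mem D μ.re hv) (Submodule.smul_mem D μ.im (hDI v hv))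
  -- Tf linearity on D
  have hTadd : ∀ v ∈ D, ∀ w ∈ D, Tf (v + w) = Tf v + Tf w := by
    intro v hv w hw
    obtain ⟨h₁, hh₁, h₂, hh₂, rfl⟩ := hdecomp v hv
    obtain ⟨g₁, hg₁, g₂, hg₂, rfl⟩ := hdecomp w hw
    simp only [hTf_def]
    have e : (h₁ + Complex.I • h₂) + (g₁ + Complex.I • g₂)
        = (h₁ + g₁) + Complex.I • (h₂ + g₂) := by
      rw [smul_add]; abel
    rw [e, hS _ (add_mem hh₁ hg₁) _ (add_mem hh₂ hg₂), hS _ hh₁ _ hh₂, hS _ hg₁ _ hg₂]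
    have e2 : (h₁ + g₁) - Complex.I • (h₂ + g₂)
        = (h₁ - Complex.I • h₂) + (g₁ - Complex.I • g₂) := by
      rw [smul_add]; abel
    rw [e2, hJadd]
  have hTI : ∀ v ∈ D, Tf (Complex.I • v) = Complex.I • Tf v := by
    intro v hv
    obtain ⟨h₁, hh₁, h₂, hh₂, rfl⟩ := hdecomp v hv
    simp only [hTf_def]
    have e : Complex.I • (h₁ + Complex.I • h₂) = -h₂ + Complex.I • h₁ := by
      rw [smul_add, smul_smul, Complex.I_mul_I, neg_one_smul, add_comm]
    rw [e]
    have en : (-h₂ : E) = -h₂ + Complex.I • (0:E) := by simp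
    rw [hS _ (neg_mem hh₂) _ hh₁, hS _ hh₁ _ hh₂]
    have e3 : -h₂ - Complex.I • h₁ = (-Complex.I) • (h₁ - Complex.I • h₂) := by
      rw [smul_sub, smul_smul]
      simp only [neg_mul, Complex.I_mul_I, neg_neg, neg_smul, one_smul]
      abel
    rw [e3, hJsmul]
    simp [Complex.conj_neg_I]
  have hTr : ∀ (r : ℝ), ∀ v ∈ D, Tf (r • v) = r • Tf v := by
    intro r v hv
    obtain ⟨h₁, hh₁, h₂, hh₂, rfl⟩ := hdecomp v hv
    simp only [hTf_def]
    have e : r • (h₁ + Complex.I • h₂) = (r • h₁) + Complex.I • (r • h₂) := by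
      rw [smul_add, smul_comm]
    rw [e, hS _ (H.smul_mem r hh₁) _ (H.smul_mem r hh₂), hS _ hh₁ _ hh₂]
    have e2 : r • h₁ - Complex.I • (r • h₂) = ((r : ℝ) : ℂ) • (h₁ - Complex.I • h₂) := by
      rw [Complex.coe_smul, smul_sub, smul_comm]
    rw [e2, hJsmul]
    rw [Complex.conj_ofReal, Complex.coe_smul]
  have hTC : ∀ (μ : ℂ), ∀ v ∈ D, Tf (μ • v) = μ • Tf v := by
    intro μ v hv
    rw [hsplit μ v, hTadd _ (Submodule.smul_mem D μ.re hv) _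
        (Submodule.smul_mem D μ.im (hDI v hv)),
      hTr μ.re v hv, hTr μ.im _ (hDI v hv), hTI v hv, hsplit μ (Tf v)]
  -- symmetry / positivity
  have hTsymm : ∀ v ∈ D, ∀ w ∈ D, (inner ℂ (Tf v) w : ℂ) = inner ℂ v (Tf w) := by
    intro v hv w hw
    exact hsymm v hv w hw
  have hqre : ∀ v ∈ D, (inner ℂ (Tf v) v : ℂ).im = 0 ∧ 0 ≤ (inner ℂ (Tf v) v : ℂ).re := by
    intro v hv
    have h := hpos v hv
    have hc : (inner ℂ (Tf v) v : ℂ) = (starRingEnd ℂ) (inner ℂ v (Tf v) : ℂ) :=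
      (inner_conj_symm _ _).symm
    constructor
    · rw [hc, Complex.conj_im]
      have := h.2
      simp only [hTf_def] at this ⊢
      rw [this, neg_zero]
    · rw [hc, Complex.conj_re]
      exact h.1
  -- unitary pairing
  have hpair : ∀ (W : E ≃ₗᵢ[ℂ] E) (a b : E), (inner ℂ (W.symm a) b : ℂ) = inner ℂ a (W b) := by
    intro W a b
    rw [← W.inner_map_map (W.symm a) b, W.apply_symm_apply]
  -- key commutation T U = U⁻¹ T
  have hTU : ∀ w ∈ D, Tf (U w) = U.symm (Tf w) := by
    intro w hw
    apply hEq
    intro v hv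
    have h1 : (inner ℂ (Tf v) (U w) : ℂ) = inner ℂ v (Tf (U w)) := hTsymm v hv (U w) (hUD w hw)
    have h2 : (inner ℂ (U.symm (Tf v)) w : ℂ) = inner ℂ v (U.symm (Tf w)) := hBsymm v hv w hw
    have h3 : (inner ℂ (U.symm (Tf v)) w : ℂ) = inner ℂ (Tf v) (U w) := hpair U (Tf v) w
    rw [← h1, ← h3, h2]
  -- maximality of B from the range conditions
  have hmax : ∀ x z : E, (∀ u ∈ D, (inner ℂ (U.symm (Tf u)) x : ℂ) = inner ℂ u z) → x ∈ D := by
    intro x z hadj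
    obtain ⟨v, hv, hvz⟩ := hBranm (z - Complex.I • x)
    have hTv : U.symm (Tf v) - Complex.I • v = z - Complex.I • x := hvz
    have horth : ∀ u ∈ D, (inner ℂ (U.symm (Tf u) + Complex.I • u) (x - v) : ℂ) = 0 := by
      intro u hu
      have h1 : (inner ℂ (U.symm (Tf u)) x : ℂ) = inner ℂ u z := hadj u hu
      have h2 : (inner ℂ (U.symm (Tf u)) v : ℂ) = inner ℂ u (U.symm (Tf v)) := hBsymm u hu v hv
      have h3 : U.symm (Tf v) = z - Complex.I • x + Complex.I • v := by
        rw [← hTv]; abel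
      rw [inner_add_left, inner_sub_right, inner_sub_right, h1, h2, h3,
        inner_add_right, inner_sub_right, inner_smul_right, inner_smul_right]
      simp only [inner_smul_left, Complex.conj_I]
      ring
    have hxv : x - v = 0 := by
      obtain ⟨u, hu, huw⟩ := hBranp (x - v)
      have h := horth u hu
      have huw' : U.symm (Tf u) + Complex.I • u = x - v := huw
      rw [huw'] at h
      exact inner_self_eq_zero.mp h
    have hx : x = v := sub_eq_zero.mp hxv
    rw [hx]; exact hv
  have hUsymmD : ∀ v ∈ D, U.symm v ∈ D := by
    intro v hv
    apply hmax (U.symm v) (Tf v)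
    intro u hu
    have e1 : (inner ℂ (U.symm (Tf u)) (U.symm v) : ℂ) = inner ℂ (Tf u) v := by
      rw [hpair U, U.apply_symm_apply]
    rw [e1]
    exact hTsymm u hu v hv
  have hTUs : ∀ v ∈ D, Tf (U.symm v) = U (Tf v) := by
    intro v hv
    have h := hTU (U.symm v) (hUsymmD v hv)
    rw [U.apply_symm_apply] at h
    rw [h, U.apply_symm_apply]
  -- Cauchy-Schwarz for the quadratic form
  have hCS : ∀ a ∈ D, ∀ b ∈ D, Complex.normSq (inner ℂ (Tf a) b : ℂ) ≤
      (inner ℂ (Tf a) a : ℂ).re * (inner ℂ (Tf b) b : ℂ).re := by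
    intro a ha b hb
    set z : ℂ := (inner ℂ (Tf a) b : ℂ) with hz_def
    by_cases hz : z = 0
    · rw [hz]
      simpa using mul_nonneg (hqre a ha).2 (hqre b hb).2
    · have hermit : (inner ℂ (Tf b) a : ℂ) = (starRingEnd ℂ) z := by
        rw [hTsymm b hb a ha, ← inner_conj_symm, hz_def]
      have expand : ∀ t : ℝ, 0 ≤ (inner ℂ (Tf a) a : ℂ).re - 2 * t * Complex.normSq z
          + t^2 * Complex.normSq z * (inner ℂ (Tf b) b : ℂ).re := by
        intro t
        set μ : ℂ := -(t : ℂ) * (starRingEnd ℂ) z with hμ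
        have hmemb : μ • b ∈ D := hDC μ b hb
        have hmem : a + μ • b ∈ D := add_mem ha hmemb
        have h0 := (hqre _ hmem).2
        have hT : Tf (a + μ • b) = Tf a + μ • Tf b := by
          rw [hTadd a ha (μ • b) hmemb, hTC μ b hb]
        have hconjμ : (starRingEnd ℂ) μ = -(t : ℂ) * z := by
          rw [hμ]
          simp [map_mul, Complex.conj_conj, Complex.conj_ofReal]
        have hq : (inner ℂ (Tf (a + μ • b)) (a + μ • b) : ℂ)
            = (inner ℂ (Tf a) a : ℂ) - 2*(t:ℂ)*(Complex.normSq z : ℂ)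
              + (t:ℂ)^2 * (Complex.normSq z : ℂ) * (inner ℂ (Tf b) b : ℂ) := by
          rw [hT, inner_add_left, inner_add_right, inner_add_right, inner_smul_right,
            inner_smul_right, inner_smul_left, inner_smul_left, hermit, ← hz_def, hconjμ, hμ]
          linear_combination (-2*(t:ℂ) + (t:ℂ)^2 * (inner ℂ (Tf b) b : ℂ)) * (Complex.mul_conj z)
        rw [hq] at h0
        have hre : ((inner ℂ (Tf a) a : ℂ) - 2*(t:ℂ)*(Complex.normSq z : ℂ)
              + (t:ℂ)^2 * (Complex.normSq z : ℂ) * (inner ℂ (Tf b) b : ℂ)).re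
            = (inner ℂ (Tf a) a : ℂ).re - 2 * t * Complex.normSq z
              + t^2 * Complex.normSq z * (inner ℂ (Tf b) b : ℂ).re := by
          have e1 : (2*(t:ℂ)*(Complex.normSq z : ℂ)) = ((2*t*Complex.normSq z : ℝ) : ℂ) := by
            push_cast; ring
          have e2 : ((t:ℂ)^2 * (Complex.normSq z : ℂ)) = ((t^2*Complex.normSq z : ℝ) : ℂ) := by
            push_cast; ring
          rw [Complex.add_re, Complex.sub_re, e1, Complex.ofReal_re]
          rw [mul_assoc ((t:ℂ)^2)]
          rw [show (t:ℂ)^2 * ((Complex.normSq z : ℂ) * (inner ℂ (Tf b) b : ℂ))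
              = ((t^2*Complex.normSq z : ℝ) : ℂ) * (inner ℂ (Tf b) b : ℂ) by push_cast; ring]
          rw [Complex.re_ofReal_mul]
        rw [hre] at h0
        exact h0
      rcases (hqre b hb).2.lt_or_eq with hB | hB
      · set Bb := (inner ℂ (Tf b) b : ℂ).re with hBb_def
        have hBb : 0 < Bb := hB
        have hBne : Bb ≠ 0 := ne_of_gt hBb
        have h := expand (1 / Bb)
        have h2 : 0 ≤ Bb * ((inner ℂ (Tf a) a : ℂ).re - 2 * (1/Bb) * Complex.normSq z
            + (1/Bb)^2 * Complex.normSq z * Bb) := mul_nonneg hBb.le h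
        have h3 : Bb * ((inner ℂ (Tf a) a : ℂ).re - 2 * (1/Bb) * Complex.normSq z
            + (1/Bb)^2 * Complex.normSq z * Bb)
            = Bb * (inner ℂ (Tf a) a : ℂ).re - Complex.normSq z := by
          field_simp
          ring
        rw [h3] at h2
        nlinarith [h2]
      · exfalso
        have hN : 0 < Complex.normSq z := Complex.normSq_pos.mpr hz
        set A := (inner ℂ (Tf a) a : ℂ).re with hA_def
        have hNne : Complex.normSq z ≠ 0 := ne_of_gt hN
        have h := expand ((A + 1) / (2 * Complex.normSq z))
        rw [← hB] at h
        have he : A - 2 * ((A + 1) / (2 * Complex.normSq z)) * Complex.normSq z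
            + ((A + 1) / (2 * Complex.normSq z))^2 * Complex.normSq z * 0 = -1 := by
          field_simp
          ring
        rw [he] at h
        linarith
  -- monotonicity of the form under W
  have hmono : ∀ (W : E ≃ₗᵢ[ℂ] E), (∀ v ∈ D, W v ∈ D) →
      (∀ v ∈ D, Tf (W v) = W.symm (Tf v)) →
      ∀ x ∈ D, (inner ℂ (Tf (W x)) (W x) : ℂ).re ≤ (inner ℂ (Tf x) x : ℂ).re := by
    intro W hWD hWT x hx
    set u : ℕ → E := fun k => (⇑W)^[k] x with hu
    have humem : ∀ k, u k ∈ D := by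
      intro k
      induction k with
      | zero => simpa [hu] using hx
      | succ n ih =>
        have e : u (n+1) = W (u n) := Function.iterate_succ_apply' _ _ _
        rw [e]; exact hWD _ ih
    have hTu : ∀ k, Tf (u k) = (⇑W.symm)^[k] (Tf x) := by
      intro k
      induction k with
      | zero => simp [hu]
      | succ n ih =>
        have e : u (n+1) = W (u n) := Function.iterate_succ_apply' _ _ _
        rw [e, hWT _ (humem n), ih, ← Function.iterate_succ_apply' (⇑W.symm)]
    have hshift : ∀ k, (inner ℂ (Tf (u k)) (u (k+2)) : ℂ) = inner ℂ (Tf (u (k+1))) (u (k+1)) := by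
      intro k
      have e1 : u (k+1) = W (u k) := Function.iterate_succ_apply' _ _ _
      have e2 : u (k+2) = W (u (k+1)) := Function.iterate_succ_apply' _ _ _
      rw [e2, e1, hWT _ (humem k), hpair W]
    set c : ℕ → ℝ := fun k => (inner ℂ (Tf (u k)) (u k) : ℂ).re with hc
    have h0 : ∀ k, 0 ≤ c k := fun k => (hqre _ (humem k)).2
    have hnormu : ∀ k, ‖u k‖ = ‖x‖ := by
      intro k
      induction k with
      | zero => simp [hu]
      | succ n ih =>
        have e : u (n+1) = W (u n) := Function.iterate_succ_apply' _ _ _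
        rw [e, W.norm_map]; exact ih
    have hnormiter : ∀ (k : ℕ) (y : E), ‖(⇑W.symm)^[k] y‖ = ‖y‖ := by
      intro k
      induction k with
      | zero => intro y; simp
      | succ n ih =>
        intro y
        rw [Function.iterate_succ_apply' (⇑W.symm), W.symm.norm_map]
        exact ih y
    have hnormT : ∀ k, ‖Tf (u k)‖ = ‖Tf x‖ := by
      intro k; rw [hTu k]; exact hnormiter k (Tf x)
    have hb : ∀ k, c k ≤ ‖Tf x‖ * ‖x‖ := by
      intro k
      calc c k ≤ ‖(inner ℂ (Tf (u k)) (u k) : ℂ)‖ := by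
            exact Complex.re_le_norm _
        _ ≤ ‖Tf (u k)‖ * ‖u k‖ := norm_inner_le_norm _ _
        _ = ‖Tf x‖ * ‖x‖ := by rw [hnormT, hnormu]
    have hlog : ∀ k, (c (k+1))^2 ≤ c k * c (k+2) := by
      intro k
      have h := hCS (u k) (humem k) (u (k+2)) (humem (k+2))
      rw [hshift k] at h
      have e : Complex.normSq (inner ℂ (Tf (u (k+1))) (u (k+1)) : ℂ) = (c (k+1))^2 := by
        rw [Complex.normSq_apply, (hqre _ (humem (k+1))).1]
        simp only [hc]
        ring
      rw [e] at h
      exact h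
    have hfin := aux_seq17 h0 hb hlog
    have e1 : u 1 = W x := by rw [hu]; simp
    have e0 : u 0 = x := by rw [hu]; simp
    simp only [hc] at hfin
    rw [e1, e0] at hfin
    exact hfin
  -- key equality
  have hkey : ∀ x ∈ D, (inner ℂ (Tf x) (U (U x)) : ℂ) = inner ℂ (Tf x) x := by
    intro x hx
    have le1 : (inner ℂ (Tf (U x)) (U x) : ℂ).re ≤ (inner ℂ (Tf x) x : ℂ).re := hmono U hUD hTU x hx
    have hsymmW : ∀ v ∈ D, Tf (U.symm v) = U.symm.symm (Tf v) := by
      intro v hv; rw [LinearIsometryEquiv.symm_symm]; exact hTUs v hv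
    have le2 := hmono U.symm hUsymmD hsymmW (U x) (hUD x hx)
    rw [U.symm_apply_apply] at le2
    have hre : (inner ℂ (Tf (U x)) (U x) : ℂ).re = (inner ℂ (Tf x) x : ℂ).re := le_antisymm le1 le2
    have hcc : (inner ℂ (Tf (U x)) (U x) : ℂ) = inner ℂ (Tf x) x := by
      apply Complex.ext
      · exact hre
      · rw [(hqre _ (hUD x hx)).1, (hqre x hx).1]
    rw [← hcc, hTU x hx, hpair U]
  -- polarization
  have hpol : ∀ y ∈ D, ∀ x ∈ D, (inner ℂ (Tf x) (U (U y)) : ℂ) = inner ℂ (Tf x) y := by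
    intro y hy x hx
    set B : E → E → ℂ := fun p q => (inner ℂ (Tf p) (U (U q)) : ℂ) - inner ℂ (Tf p) q with hB
    have hdiag : ∀ p ∈ D, B p p = 0 := by
      intro p hp
      simp only [hB]
      rw [hkey p hp, sub_self]
    have hBaddl : ∀ p ∈ D, ∀ p' ∈ D, ∀ q : E, B (p+p') q = B p q + B p' q := by
      intro p hp p' hp' q
      simp only [hB]
      rw [hTadd p hp p' hp', inner_add_left, inner_add_left]
      ring
    have hBaddr : ∀ (p q q' : E), B p (q+q') = B p q + B p q' := by
      intro p q q'
      simp only [hB]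
      rw [map_add, map_add, inner_add_right, inner_add_right]
      ring
    have hI_l : ∀ p ∈ D, ∀ q : E, B (Complex.I • p) q = -Complex.I * B p q := by
      intro p hp q
      simp only [hB]
      rw [hTI p hp, inner_smul_left, inner_smul_left]
      simp only [Complex.conj_I]
      ring
    have hI_r : ∀ (p q : E), B p (Complex.I • q) = Complex.I * B p q := by
      intro p q
      simp only [hB]
      rw [map_smul, map_smul, inner_smul_right, inner_smul_right]
      ring
    have h1 : B x y + B y x = 0 := by
      have hd := hdiag (x + y) (add_mem hx hy)
      rw [hBaddl x hx y hy, hBaddr, hBaddr, hdiag x hx, hdiag y hy] at hd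
      linear_combination hd
    have h2 : B x y = B y x := by
      have hd := hdiag (x + Complex.I • y) (add_mem hx (hDI y hy))
      rw [hBaddl x hx _ (hDI y hy), hBaddr, hBaddr, hI_r, hI_l y hy, hI_r, hI_l y hy,
        hdiag x hx, hdiag y hy] at hd
      have h3 : Complex.I * (B x y - B y x) = 0 := by linear_combination hd
      rcases mul_eq_zero.mp h3 with h | h
      · exact absurd h Complex.I_ne_zero
      · exact sub_eq_zero.mp h
    have h4 : B x y = 0 := by linear_combination h1 / 2 + h2 / 2
    simp only [hB] at h4
    exact sub_eq_zero.mp h4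
  have hJpair : ∀ w v : E, (inner ℂ (J v) w : ℂ) = inner ℂ (J w) v := by
    intro w v
    conv_lhs => rw [← hJinv w]
    rw [hJinner]
  -- U² = 1 on D
  have hUU_D : ∀ y ∈ D, U (U y) = y := by
    intro y hy
    have hJw : J (U (U y) - y) = 0 := by
      have hz : ∀ v ∈ D, (inner ℂ v (J (U (U y) - y)) : ℂ) = inner ℂ v (0 : E) := by
        intro v hv
        have h1 : (inner ℂ (Tf (S v)) (U (U y)) : ℂ) = inner ℂ (Tf (S v)) y :=
          hpol y hy (S v) (hSmem v hv)
        have h2 : Tf (S v) = J v := by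
          simp only [hTf_def]
          rw [hSS v hv]
        rw [h2] at h1
        have h3 : (inner ℂ (J v) (U (U y) - y) : ℂ) = 0 := by
          rw [inner_sub_right, h1, sub_self]
        rw [hJpair] at h3
        have h4 : (inner ℂ v (J (U (U y) - y)) : ℂ) = 0 := by
          rw [← inner_conj_symm, h3, map_zero]
        rw [h4, inner_zero_right]
      exact hEq _ _ hz
    have h5 : U (U y) - y = 0 := by
      rw [← hJinv (U (U y) - y), hJw, hJ0]
    exact sub_eq_zero.mp h5
  have hUU : ∀ y : E, U (U y) = y := by
    have hfg : (fun y : E => U (U y)) = fun y : E => y :=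
      Continuous.ext_on hdense (U.continuous.comp U.continuous) continuous_id
        (fun y hy => hUU_D y hy)
    intro y
    exact congrFun hfg y
  constructor
  · intro x
    calc U x = U.symm (U (U x)) := (U.symm_apply_apply (U x)).symm
      _ = U.symm x := by rw [hUU x]
  · apply Set.Subset.antisymm
    · rintro _ ⟨h, hh, rfl⟩
      exact hUH h hh
    · intro h hh
      exact ⟨U h, hUH h hh, hUU h⟩
end

section
/- Let H be a standard subspace, V a unitary with VH ⊆ H and V = J_H V* J_H, and U := V². Then B_U := U*Δ_H^{1/2} satisfies B_U ⊆ V*Δ_H^{1/2}V, and V*Δ_H^{1/2}V is a positive self-adjoint operator; hence B_U admits a positive self-adjoint extension. -/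
open Complex Submodule Filter Topology

variable {E : Type*} [NormedAddCommGroup E] [InnerProductSpace ℂ E]

/-- If `V` is a symmetric (`V = J V* J`) unitary endomorphism of `H` and `U = V²`, then
`B_U = U* Δ_H^{1/2} ⊆ V* Δ_H^{1/2} V`, and `V* Δ_H^{1/2} V` is positive and selfadjoint;
hence `B_U` has a positive selfadjoint extension. -/
theorem stmt18 {E : Type*} [NormedAddCommGroup E] [InnerProductSpace ℂ E] [CompleteSpace E]
    (H : Submodule ℝ E) (hH : IsStandardSubspace H)
    (S : E → E)
    (hS : ∀ h₁ ∈ H, ∀ h₂ ∈ H, S (h₁ + Complex.I • h₂) = h₁ - Complex.I • h₂)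
    (J : E → E)
    (hJadd : ∀ x y : E, J (x + y) = J x + J y)
    (hJsmul : ∀ (c : ℂ) (x : E), J (c • x) = (starRingEnd ℂ) c • J x)
    (hJinv : ∀ x : E, J (J x) = x)
    (hJinner : ∀ x y : E, (inner ℂ (J x) (J y) : ℂ) = inner ℂ y x)
    (hpos : ∀ v ∈ (cspan H : Submodule ℝ E),
        0 ≤ (inner ℂ v (J (S v)) : ℂ).re ∧ (inner ℂ v (J (S v)) : ℂ).im = 0)
    (hsymm : ∀ v ∈ (cspan H : Submodule ℝ E), ∀ w ∈ (cspan H : Submodule ℝ E),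
        (inner ℂ (J (S v)) w : ℂ) = inner ℂ v (J (S w)))
    (hran : ∀ w : E, ∃ v ∈ (cspan H : Submodule ℝ E), v + J (S v) = w)
    (V : E ≃ₗᵢ[ℂ] E) (hVH : ∀ h ∈ H, V h ∈ H)
    (hVsym : ∀ x : E, V x = J (V.symm (J x))) :
    (∀ v ∈ (cspan H : Submodule ℝ E),
        V v ∈ (cspan H : Submodule ℝ E) ∧
        (V.trans V).symm (J (S v)) = V.symm (J (S (V v)))) ∧
    (∀ v : E, V v ∈ (cspan H : Submodule ℝ E) →
        ∀ w : E, V w ∈ (cspan H : Submodule ℝ E) →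
          (inner ℂ (V.symm (J (S (V v)))) w : ℂ) = inner ℂ v (V.symm (J (S (V w))))) ∧
    (∀ v : E, V v ∈ (cspan H : Submodule ℝ E) →
        0 ≤ (inner ℂ v (V.symm (J (S (V v)))) : ℂ).re ∧
          (inner ℂ v (V.symm (J (S (V v)))) : ℂ).im = 0) ∧
    (∀ w : E, ∃ v : E, V v ∈ (cspan H : Submodule ℝ E) ∧
        v + V.symm (J (S (V v))) = w) := by
  -- V.symm (J x) = J (V x)
  have hVsymJ : ∀ x : E, V.symm (J x) = J (V x) := by
    intro x
    have := hVsym x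
    rw [this, hJinv]
  -- inner moves
  have hinnL : ∀ a w : E, (inner ℂ (V.symm a) w : ℂ) = inner ℂ a (V w) := by
    intro a w
    rw [← V.inner_map_map (V.symm a) w, V.apply_symm_apply]
  have hinnR : ∀ v b : E, (inner ℂ v (V.symm b) : ℂ) = inner ℂ (V v) b := by
    intro v b
    rw [← V.inner_map_map v (V.symm b), V.apply_symm_apply]
  -- V preserves cspan and commutes with S there
  have hVcspan : ∀ v ∈ (cspan H : Submodule ℝ E), V v ∈ (cspan H : Submodule ℝ E) ∧
      V (S v) = S (V v) := by
    intro v hv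
    rcases Submodule.mem_sup.1 hv with ⟨h₁, h1H, z, hzH, rfl⟩
    rcases Submodule.mem_map.1 hzH with ⟨h₂, h2H, rfl⟩
    have hmul : ∀ x : E, mulI E x = Complex.I • x := fun _ => rfl
    constructor
    · refine Submodule.mem_sup.2 ⟨V h₁, hVH h₁ h1H, mulI E (V h₂),
        Submodule.mem_map.2 ⟨V h₂, hVH h₂ h2H, rfl⟩, ?_⟩
      rw [hmul, hmul, ← map_smul, ← map_add]
    · rw [hmul, hS h₁ h1H h₂ h2H]
      have : V (h₁ + Complex.I • h₂) = V h₁ + Complex.I • V h₂ := by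
        rw [map_add, map_smul]
      rw [this, hS (V h₁) (hVH h₁ h1H) (V h₂) (hVH h₂ h2H)]
      rw [map_sub, map_smul]
  refine ⟨?_, ?_, ?_, ?_⟩
  · intro v hv
    obtain ⟨hVv, hcomm⟩ := hVcspan v hv
    refine ⟨hVv, ?_⟩
    have : (V.trans V).symm (J (S v)) = V.symm (V.symm (J (S v))) := rfl
    rw [this, hVsymJ (S v), hcomm]
  · intro v hv w hw
    rw [hinnL, hinnR]
    exact hsymm (V v) hv (V w) hw
  · intro v hv
    rw [hinnR]
    exact hpos (V v) hv
  · intro w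
    rcases hran (V w) with ⟨v', hv', heq⟩
    refine ⟨V.symm v', ?_, ?_⟩
    · rw [V.apply_symm_apply]; exact hv'
    · rw [V.apply_symm_apply, ← map_add, heq, V.symm_apply_apply]
end

section
/- Consider ℋ = L²(ℝ, dθ), (Δ^{it}ψ)(θ) = ψ(θ − 2πt), (Jψ)(θ) = conj(ψ(θ)), and the standard subspace H = {ψ ∈ H²(S_π) : conj(ψ(θ + iπ)) = ψ(θ) for a.e. θ}, where H²(S_π) is the Hardy space of the strip 0 < Im ζ < π realized inside L²(ℝ) via boundary values. Then the antiunitary involution (Yψ)(θ) = conj(ψ(−θ)) satisfies YH = H. -/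
open Complex MeasureTheory Filter Topology

lemma conj_hasDerivAt {F : ℂ → ℂ} {z c : ℂ} (h : HasDerivAt F c (-((starRingEnd ℂ) z))) :
    HasDerivAt (fun ζ => (starRingEnd ℂ) (F (-((starRingEnd ℂ) ζ)))) (-((starRingEnd ℂ) c)) z := by
  rw [hasDerivAt_iff_tendsto_slope] at h ⊢
  set m : ℂ → ℂ := fun ζ => -((starRingEnd ℂ) ζ) with hm
  have hmc : Continuous m := continuous_star.neg
  have hmt : Tendsto m (𝓝[≠] z) (𝓝[≠] (m z)) := by
    rw [tendsto_nhdsWithin_iff]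
    constructor
    · exact (hmc.tendsto z).mono_left nhdsWithin_le_nhds
    · filter_upwards [self_mem_nhdsWithin] with y hy
      simp only [Set.mem_compl_iff, Set.mem_singleton_iff] at hy ⊢
      intro hc
      apply hy
      have : (starRingEnd ℂ) y = (starRingEnd ℂ) z := by
        have := congrArg Neg.neg hc
        simpa [m] using hc
      simpa using congrArg (starRingEnd ℂ) this
  have h2 : Tendsto (fun y => -((starRingEnd ℂ) (slope F (m z) (m y)))) (𝓝[≠] z)
      (𝓝 (-((starRingEnd ℂ) c))) := by
    exact (((h.comp hmt)).star).neg
  convert h2 using 2 with y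
  simp only [slope_def_field, m]
  by_cases hyz : y = z
  · simp [hyz]
  · rw [map_div₀, map_sub, map_sub, map_neg, map_neg, Complex.conj_conj, Complex.conj_conj]
    rw [show (-y - -z) = -(y - z) by ring, div_neg, neg_neg]

lemma strip_open : IsOpen {ζ : ℂ | 0 < ζ.im ∧ ζ.im < Real.pi} := by
  have : {ζ : ℂ | 0 < ζ.im ∧ ζ.im < Real.pi} = Complex.im ⁻¹' Set.Ioo 0 Real.pi := rfl
  rw [this]; exact isOpen_Ioo.preimage Complex.continuous_im

lemma harg (θ y : ℝ) :
    -((starRingEnd ℂ) ((θ : ℂ) + (y : ℂ) * Complex.I)) = ((-θ : ℝ) : ℂ) + (y : ℂ) * Complex.I := by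
  push_cast
  simp [Complex.ext_iff]

lemma aeNeg {P : ℝ → Prop} (h : ∀ᵐ θ : ℝ, P θ) : ∀ᵐ θ : ℝ, P (-θ) :=
  (Measure.measurePreserving_neg (volume : Measure ℝ)).quasiMeasurePreserving.ae h

lemma mem_aux (ψ : ℝ → ℂ)
    (hψ : MemLp ψ 2 (volume : Measure ℝ) ∧
      ∃ F : ℂ → ℂ,
        DifferentiableOn ℂ F {ζ : ℂ | 0 < ζ.im ∧ ζ.im < Real.pi} ∧
        (∃ C : ENNReal, C ≠ ⊤ ∧ ∀ y ∈ Set.Ioo (0 : ℝ) Real.pi,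
          (∫⁻ θ : ℝ, (‖F ((θ : ℂ) + (y : ℂ) * Complex.I)‖₊ : ENNReal) ^ 2) ≤ C) ∧
        (∀ᵐ θ : ℝ, Filter.Tendsto (fun y : ℝ => F ((θ : ℂ) + (y : ℂ) * Complex.I))
          (nhdsWithin 0 (Set.Ioi 0)) (nhds (ψ θ))) ∧
        (∀ᵐ θ : ℝ, Filter.Tendsto (fun y : ℝ => F ((θ : ℂ) + (y : ℂ) * Complex.I))
          (nhdsWithin Real.pi (Set.Iio Real.pi)) (nhds ((starRingEnd ℂ) (ψ θ))))) :
    (MemLp (fun θ : ℝ => (starRingEnd ℂ) (ψ (-θ))) 2 (volume : Measure ℝ) ∧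
      ∃ F : ℂ → ℂ,
        DifferentiableOn ℂ F {ζ : ℂ | 0 < ζ.im ∧ ζ.im < Real.pi} ∧
        (∃ C : ENNReal, C ≠ ⊤ ∧ ∀ y ∈ Set.Ioo (0 : ℝ) Real.pi,
          (∫⁻ θ : ℝ, (‖F ((θ : ℂ) + (y : ℂ) * Complex.I)‖₊ : ENNReal) ^ 2) ≤ C) ∧
        (∀ᵐ θ : ℝ, Filter.Tendsto (fun y : ℝ => F ((θ : ℂ) + (y : ℂ) * Complex.I))
          (nhdsWithin 0 (Set.Ioi 0)) (nhds ((starRingEnd ℂ) (ψ (-θ))))) ∧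
        (∀ᵐ θ : ℝ, Filter.Tendsto (fun y : ℝ => F ((θ : ℂ) + (y : ℂ) * Complex.I))
          (nhdsWithin Real.pi (Set.Iio Real.pi))
          (nhds ((starRingEnd ℂ) ((starRingEnd ℂ) (ψ (-θ))))))) := by
  obtain ⟨hL2, F, hF, ⟨C, hC, hbd⟩, h0, hπ⟩ := hψ
  set G : ℂ → ℂ := fun ζ => (starRingEnd ℂ) (F (-((starRingEnd ℂ) ζ))) with hG
  constructor
  · -- Memℒp
    have h1 : MemLp (fun θ : ℝ => ψ (-θ)) 2 (volume : Measure ℝ) :=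
      hL2.comp_measurePreserving (Measure.measurePreserving_neg _)
    have : MemLp ((starRingEnd ℂ) ∘ fun θ : ℝ => ψ (-θ)) 2 (volume : Measure ℝ) := by
      refine LipschitzWith.comp_memLp (K := 1) ?_ (by simp) h1
      exact fun x y => star_isometry.lipschitz x y
    exact this
  refine ⟨G, ?_, ⟨C, hC, ?_⟩, ?_, ?_⟩
  · -- differentiability
    intro ζ hζ
    have hmem : -((starRingEnd ℂ) ζ) ∈ {ζ : ℂ | 0 < ζ.im ∧ ζ.im < Real.pi} := by
      simpa using hζ
    have hd : DifferentiableAt ℂ F (-((starRingEnd ℂ) ζ)) :=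
      (hF _ hmem).differentiableAt (strip_open.mem_nhds hmem)
    exact ((conj_hasDerivAt hd.hasDerivAt).differentiableAt).differentiableWithinAt
  · -- L² bound
    intro y hy
    have heq : ∀ θ : ℝ, (‖G ((θ : ℂ) + (y : ℂ) * Complex.I)‖₊ : ENNReal) ^ 2
        = (‖F (((-θ : ℝ) : ℂ) + (y : ℂ) * Complex.I)‖₊ : ENNReal) ^ 2 := by
      intro θ
      rw [hG]
      simp only [harg θ y]
      congr 2
      exact nnnorm_star _
    calc (∫⁻ θ : ℝ, (‖G ((θ : ℂ) + (y : ℂ) * Complex.I)‖₊ : ENNReal) ^ 2)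
        = ∫⁻ θ : ℝ, (‖F (((-θ : ℝ) : ℂ) + (y : ℂ) * Complex.I)‖₊ : ENNReal) ^ 2 := by
          simp only [heq]
      _ = ∫⁻ θ : ℝ, (‖F ((θ : ℂ) + (y : ℂ) * Complex.I)‖₊ : ENNReal) ^ 2 :=
          (Measure.measurePreserving_neg (volume : Measure ℝ)).lintegral_comp_emb
            (MeasurableEquiv.neg ℝ).measurableEmbedding
            (fun t : ℝ => (‖F ((t : ℂ) + (y : ℂ) * Complex.I)‖₊ : ENNReal) ^ 2)
      _ ≤ C := hbd y hy
  · -- lower boundary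
    filter_upwards [aeNeg h0] with θ hθ
    have : (fun y : ℝ => G ((θ : ℂ) + (y : ℂ) * Complex.I))
        = fun y : ℝ => (starRingEnd ℂ) (F (((-θ : ℝ) : ℂ) + (y : ℂ) * Complex.I)) := by
      funext y; rw [hG]; simp only [harg θ y]
    rw [this]
    exact hθ.star
  · -- upper boundary
    filter_upwards [aeNeg hπ] with θ hθ
    have : (fun y : ℝ => G ((θ : ℂ) + (y : ℂ) * Complex.I))
        = fun y : ℝ => (starRingEnd ℂ) (F (((-θ : ℝ) : ℂ) + (y : ℂ) * Complex.I)) := by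
      funext y; rw [hG]; simp only [harg θ y]
    rw [this]
    simpa using hθ.star

/-- The standard subspace of the irreducible standard pair in the strip picture:
`H = {ψ ∈ H²(S_π) : conj (ψ(θ + iπ)) = ψ(θ)}`, realized as those square-integrable
functions on `ℝ` that are boundary values of a holomorphic function `F` on the strip
`0 < Im ζ < π` with uniformly `L²`-bounded horizontal sections, whose boundary value
at `Im ζ = π` is the complex conjugate of the one at `Im ζ = 0`. The antiunitary
involution `(Yψ)(θ) = conj (ψ(−θ))` satisfies `YH = H`. -/
theorem stmt19 (H : Set (ℝ → ℂ))
    (hHdef : H = {ψ : ℝ → ℂ | MemLp ψ 2 (volume : Measure ℝ) ∧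
      ∃ F : ℂ → ℂ,
        DifferentiableOn ℂ F {ζ : ℂ | 0 < ζ.im ∧ ζ.im < Real.pi} ∧
        (∃ C : ENNReal, C ≠ ⊤ ∧ ∀ y ∈ Set.Ioo (0 : ℝ) Real.pi,
          (∫⁻ θ : ℝ, (‖F ((θ : ℂ) + (y : ℂ) * Complex.I)‖₊ : ENNReal) ^ 2) ≤ C) ∧
        (∀ᵐ θ : ℝ, Filter.Tendsto (fun y : ℝ => F ((θ : ℂ) + (y : ℂ) * Complex.I))
          (nhdsWithin 0 (Set.Ioi 0)) (nhds (ψ θ))) ∧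
        (∀ᵐ θ : ℝ, Filter.Tendsto (fun y : ℝ => F ((θ : ℂ) + (y : ℂ) * Complex.I))
          (nhdsWithin Real.pi (Set.Iio Real.pi)) (nhds ((starRingEnd ℂ) (ψ θ))))}) :
    (fun ψ : ℝ → ℂ => fun θ : ℝ => (starRingEnd ℂ) (ψ (-θ))) '' H = H := by
  have hY : ∀ ψ ∈ H, (fun θ : ℝ => (starRingEnd ℂ) (ψ (-θ))) ∈ H := by
    intro ψ hψ
    rw [hHdef] at hψ ⊢
    exact mem_aux ψ hψ
  have hinv : ∀ ψ : ℝ → ℂ,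
      (fun θ : ℝ => (starRingEnd ℂ) ((fun t : ℝ => (starRingEnd ℂ) (ψ (-t))) (-θ))) = ψ := by
    intro ψ; funext θ; simp
  ext ψ
  constructor
  · rintro ⟨φ, hφ, rfl⟩
    exact hY φ hφ
  · intro hψ
    exact ⟨_, hY ψ hψ, hinv ψ⟩
end
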